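/- arXiv:1401.7541 — 7 statements merged into one kernel-verified Lean document; each statement's English description precedes it below -/
import Mathlib

section
/- Let X be a nonempty set and let u : X → ℂ be a function. Suppose there exist a Hilbert space H and bounded maps P, Q : X → H with sup_x ‖P(x)‖ ≤ C₁ and sup_y ‖Q(y)‖ ≤ C₂, such that for a group G = X with group structure, u(y⁻¹x) = ⟨P(x), Q(y)⟩ for all x, y. Then for every n and all x₁,…,xₙ ∈ G, the n×n matrix [u(xⱼ⁻¹xᵢ)] defines a Schur multiplication operator on n×n matrices whose operator norm (as a map on bounded operators on ℂⁿ with Schur/entrywise product) is at most C₁·C₂. -/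
noncomputable section

open scoped ComplexConjugate
open Finset

lemma schur_clm_apply {n : ℕ} (A : Matrix (Fin n) (Fin n) ℂ) (ξ : EuclideanSpace ℂ (Fin n))
    (i : Fin n) : Matrix.toEuclideanCLM (𝕜 := ℂ) A ξ i = ∑ j, A i j * ξ j := rfl

lemma schur_norm_sq_sum {k : ℕ} (z : EuclideanSpace ℂ (Fin k)) :
    ‖z‖ ^ 2 = ∑ i, ‖z i‖ ^ 2 := by
  rw [EuclideanSpace.norm_eq, Real.sq_sqrt] ; positivity

lemma schur_sum_norm_sq {n d : ℕ} (p : Fin n → EuclideanSpace ℂ (Fin d))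
    (η : EuclideanSpace ℂ (Fin n)) :
    ∑ m : Fin d, ‖(WithLp.equiv 2 (Fin n → ℂ)).symm (fun i => η i * p i m)‖ ^ 2
      = ∑ i, ‖η i‖ ^ 2 * ‖p i‖ ^ 2 := by
  have h : ∀ m : Fin d, ‖(WithLp.equiv 2 (Fin n → ℂ)).symm (fun i => η i * p i m)‖ ^ 2
      = ∑ i, ‖η i‖ ^ 2 * ‖p i m‖ ^ 2 := by
    intro m
    rw [schur_norm_sq_sum]
    exact Finset.sum_congr rfl fun i _ => by
      rw [WithLp.equiv_symm_apply, PiLp.toLp_apply, norm_mul, mul_pow]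
  calc ∑ m : Fin d, ‖(WithLp.equiv 2 (Fin n → ℂ)).symm (fun i => η i * p i m)‖ ^ 2
      = ∑ m : Fin d, ∑ i, ‖η i‖ ^ 2 * ‖p i m‖ ^ 2 := Finset.sum_congr rfl fun m _ => h m
    _ = ∑ i, ∑ m : Fin d, ‖η i‖ ^ 2 * ‖p i m‖ ^ 2 := Finset.sum_comm
    _ = ∑ i, ‖η i‖ ^ 2 * ‖p i‖ ^ 2 := by
        refine Finset.sum_congr rfl fun i _ => ?_
        rw [← Finset.mul_sum, schur_norm_sq_sum]

lemma schur_key {n d : ℕ} (A : Matrix (Fin n) (Fin n) ℂ)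
    (p q : Fin n → EuclideanSpace ℂ (Fin d)) (η ξ : EuclideanSpace ℂ (Fin n)) :
    ‖∑ i, ∑ j, conj (η i) * ((inner ℂ (p i) (q j) : ℂ) * A i j) * ξ j‖ ≤
      ‖Matrix.toEuclideanCLM (𝕜 := ℂ) A‖ *
        (Real.sqrt (∑ i, ‖η i‖ ^ 2 * ‖p i‖ ^ 2) *
          Real.sqrt (∑ j, ‖ξ j‖ ^ 2 * ‖q j‖ ^ 2)) := by
  set T := Matrix.toEuclideanCLM (𝕜 := ℂ) A with hT
  set v : Fin d → EuclideanSpace ℂ (Fin n) := fun m => (WithLp.equiv 2 (Fin n → ℂ)).symm (fun i => η i * p i m) with hv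
  set w : Fin d → EuclideanSpace ℂ (Fin n) := fun m => (WithLp.equiv 2 (Fin n → ℂ)).symm (fun j => ξ j * q j m) with hw
  have h1 : ∑ i, ∑ j, conj (η i) * ((inner ℂ (p i) (q j) : ℂ) * A i j) * ξ j
      = ∑ m, (inner ℂ (v m) (T (w m)) : ℂ) := by
    have hL : ∀ i j, conj (η i) * ((inner ℂ (p i) (q j) : ℂ) * A i j) * ξ j
        = ∑ m, conj (η i) * conj (p i m) * (q j m * (A i j * ξ j)) := by
      intro i j
      simp only [PiLp.inner_apply, RCLike.inner_apply', Finset.sum_mul, Finset.mul_sum]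
      exact Finset.sum_congr rfl fun m _ => by ring
    have hR : ∀ m, (inner ℂ (v m) (T (w m)) : ℂ)
        = ∑ i, ∑ j, conj (η i) * conj (p i m) * (q j m * (A i j * ξ j)) := by
      intro m
      rw [hT]
      simp only [PiLp.inner_apply, RCLike.inner_apply', hv, hw, schur_clm_apply,
        WithLp.equiv_symm_apply, PiLp.toLp_apply, Finset.mul_sum, map_mul]
      exact Finset.sum_congr rfl fun i _ => Finset.sum_congr rfl fun j _ => by ring
    simp only [hL, hR]
    conv_rhs => rw [Finset.sum_comm]
    exact Finset.sum_congr rfl fun i _ => Finset.sum_comm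
  rw [h1]
  have h2 : ∀ m : Fin d, ‖(inner ℂ (v m) (T (w m)) : ℂ)‖ ≤ ‖v m‖ * (‖T‖ * ‖w m‖) := by
    intro m
    refine (norm_inner_le_norm _ _).trans ?_
    exact mul_le_mul_of_nonneg_left (T.le_opNorm _) (norm_nonneg _)
  calc ‖∑ m, (inner ℂ (v m) (T (w m)) : ℂ)‖ ≤ ∑ m, ‖(inner ℂ (v m) (T (w m)) : ℂ)‖ :=
        norm_sum_le _ _
    _ ≤ ∑ m, ‖v m‖ * (‖T‖ * ‖w m‖) := Finset.sum_le_sum fun m _ => h2 m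
    _ = ‖T‖ * ∑ m, ‖v m‖ * ‖w m‖ := by
        rw [Finset.mul_sum]; exact Finset.sum_congr rfl fun m _ => by ring
    _ ≤ ‖T‖ * (Real.sqrt (∑ m, ‖v m‖ ^ 2) * Real.sqrt (∑ m, ‖w m‖ ^ 2)) :=
        mul_le_mul_of_nonneg_left (Real.sum_mul_le_sqrt_mul_sqrt _ _ _) (norm_nonneg _)
    _ = ‖T‖ * (Real.sqrt (∑ i, ‖η i‖ ^ 2 * ‖p i‖ ^ 2) *
          Real.sqrt (∑ j, ‖ξ j‖ ^ 2 * ‖q j‖ ^ 2)) := by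
        rw [hv, hw, schur_sum_norm_sq, schur_sum_norm_sq]


/-- If `u(y⁻¹x) = ⟨P x, Q y⟩` with `‖P‖ ≤ C₁`, `‖Q‖ ≤ C₂`, then every finite matrix
`[u(xⱼ⁻¹xᵢ)]` is a Schur multiplier of norm at most `C₁ * C₂`. -/
theorem schur_norm_le_of_hilbert_factorization
    {G : Type} [Group G] [Nonempty G] (u : G → ℂ) (C₁ C₂ : ℝ)
    (H : Type) [NormedAddCommGroup H] [InnerProductSpace ℂ H]
    (P Q : G → H) (hP : ∀ x, ‖P x‖ ≤ C₁) (hQ : ∀ y, ‖Q y‖ ≤ C₂)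
    (hu : ∀ x y : G, u (y⁻¹ * x) = (inner ℂ (P x) (Q y) : ℂ)) :
    ∀ (n : ℕ) (x : Fin n → G) (A : Matrix (Fin n) (Fin n) ℂ),
      ‖Matrix.toEuclideanCLM (𝕜 := ℂ)
          (Matrix.of fun i j => u ((x j)⁻¹ * x i) * A i j)‖
        ≤ C₁ * C₂ * ‖Matrix.toEuclideanCLM (𝕜 := ℂ) A‖ := by
  have hC₁ : 0 ≤ C₁ := le_trans (norm_nonneg _) (hP (Classical.arbitrary G))
  have hC₂ : 0 ≤ C₂ := le_trans (norm_nonneg _) (hQ (Classical.arbitrary G))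
  intro n x A
  set M : Matrix (Fin n) (Fin n) ℂ := Matrix.of fun i j => u ((x j)⁻¹ * x i) * A i j with hM
  set T := Matrix.toEuclideanCLM (𝕜 := ℂ) M with hTdef
  set TA := Matrix.toEuclideanCLM (𝕜 := ℂ) A with hTA
  -- finite dimensional subspace
  set K : Submodule ℂ H :=
    Submodule.span ℂ ((Set.range fun i => P (x i)) ∪ (Set.range fun j => Q (x j))) with hK
  haveI : FiniteDimensional ℂ K := by
    apply FiniteDimensional.span_of_finite
    exact (Set.finite_range _).union (Set.finite_range _)
  set d := Module.finrank ℂ K with hd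
  set b : OrthonormalBasis (Fin d) ℂ K := stdOrthonormalBasis ℂ K with hb
  have hPm : ∀ i : Fin n, P (x i) ∈ K := fun i =>
    Submodule.subset_span (Or.inl ⟨i, rfl⟩)
  have hQm : ∀ j : Fin n, Q (x j) ∈ K := fun j =>
    Submodule.subset_span (Or.inr ⟨j, rfl⟩)
  set p : Fin n → EuclideanSpace ℂ (Fin d) := fun i => b.repr ⟨P (x i), hPm i⟩ with hp
  set q : Fin n → EuclideanSpace ℂ (Fin d) := fun j => b.repr ⟨Q (x j), hQm j⟩ with hq
  have hpn : ∀ i, ‖p i‖ ≤ C₁ := by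
    intro i
    rw [hp]
    rw [b.repr.norm_map]
    exact (hP (x i))
  have hqn : ∀ j, ‖q j‖ ≤ C₂ := by
    intro j
    rw [hq, b.repr.norm_map]
    exact (hQ (x j))
  have hinner : ∀ i j, (inner ℂ (p i) (q j) : ℂ) = u ((x j)⁻¹ * x i) := by
    intro i j
    rw [hp, hq, b.repr.inner_map_map, hu]
    rfl
  refine T.opNorm_le_bound (by positivity) fun ξ => ?_
  rcases eq_or_ne ‖T ξ‖ 0 with h0 | h0
  · rw [h0]; positivity
  · have hkey : ‖T ξ‖ ^ 2 ≤ (C₁ * C₂ * ‖TA‖ * ‖ξ‖) * ‖T ξ‖ := by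
      set η := T ξ with hη
      have e1 : (‖T ξ‖ : ℂ) ^ 2 = inner ℂ η (T ξ) := by
        rw [hη, inner_self_eq_norm_sq_to_K]
        norm_cast
      have e2 : (inner ℂ η (T ξ) : ℂ)
          = ∑ i, ∑ j, conj (η i) * ((inner ℂ (p i) (q j) : ℂ) * A i j) * ξ j := by
        rw [PiLp.inner_apply]
        refine Finset.sum_congr rfl fun i _ => ?_
        rw [RCLike.inner_apply', hTdef, schur_clm_apply, Finset.mul_sum]
        refine Finset.sum_congr rfl fun j _ => ?_
        rw [hinner, hM]
        simp only [Matrix.of_apply]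
        ring
      have e3 : ‖T ξ‖ ^ 2 = ‖∑ i, ∑ j, conj (η i) * ((inner ℂ (p i) (q j) : ℂ) * A i j) * ξ j‖ := by
        rw [← e2, ← e1]
        rw [norm_pow, Complex.norm_real, norm_norm]
      rw [e3]
      refine (schur_key A p q η ξ).trans ?_
      have b1 : Real.sqrt (∑ i, ‖η i‖ ^ 2 * ‖p i‖ ^ 2) ≤ C₁ * ‖η‖ := by
        have : ∑ i, ‖η i‖ ^ 2 * ‖p i‖ ^ 2 ≤ C₁ ^ 2 * ‖η‖ ^ 2 := by
          rw [schur_norm_sq_sum η, Finset.mul_sum]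
          refine Finset.sum_le_sum fun i _ => ?_
          rw [mul_comm (C₁ ^ 2) _]
          exact mul_le_mul_of_nonneg_left
            (pow_le_pow_left₀ (norm_nonneg _) (hpn i) 2) (by positivity)
        refine (Real.sqrt_le_sqrt this).trans ?_
        rw [show C₁ ^ 2 * ‖η‖ ^ 2 = (C₁ * ‖η‖) ^ 2 by ring, Real.sqrt_sq (by positivity)]
      have b2 : Real.sqrt (∑ j, ‖ξ j‖ ^ 2 * ‖q j‖ ^ 2) ≤ C₂ * ‖ξ‖ := by
        have : ∑ j, ‖ξ j‖ ^ 2 * ‖q j‖ ^ 2 ≤ C₂ ^ 2 * ‖ξ‖ ^ 2 := by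
          rw [schur_norm_sq_sum ξ, Finset.mul_sum]
          refine Finset.sum_le_sum fun j _ => ?_
          rw [mul_comm (C₂ ^ 2) _]
          exact mul_le_mul_of_nonneg_left
            (pow_le_pow_left₀ (norm_nonneg _) (hqn j) 2) (by positivity)
        refine (Real.sqrt_le_sqrt this).trans ?_
        rw [show C₂ ^ 2 * ‖ξ‖ ^ 2 = (C₂ * ‖ξ‖) ^ 2 by ring, Real.sqrt_sq (by positivity)]
      calc ‖TA‖ * (Real.sqrt (∑ i, ‖η i‖ ^ 2 * ‖p i‖ ^ 2) *
              Real.sqrt (∑ j, ‖ξ j‖ ^ 2 * ‖q j‖ ^ 2))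
          ≤ ‖TA‖ * ((C₁ * ‖η‖) * (C₂ * ‖ξ‖)) := by
            refine mul_le_mul_of_nonneg_left ?_ (norm_nonneg _)
            exact mul_le_mul b1 b2 (Real.sqrt_nonneg _) (by positivity)
        _ = (C₁ * C₂ * ‖TA‖ * ‖ξ‖) * ‖η‖ := by ring
    have hpos : 0 < ‖T ξ‖ := lt_of_le_of_ne (norm_nonneg _) (Ne.symm h0)
    have h' : ‖T ξ‖ * ‖T ξ‖ ≤ (C₁ * C₂ * ‖TA‖ * ‖ξ‖) * ‖T ξ‖ := by
      rw [← sq]; exact hkey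
    exact le_of_mul_le_mul_right h' hpos
end
end

section
/- Let G be a group, H ≤ G a subgroup, and u : H → ℂ a function admitting a Hilbert-space factorization over H with bound C. Define ũ : G → ℂ by ũ(x) = u(x) for x ∈ H and ũ(x) = 0 otherwise. Then ũ admits a Hilbert-space factorization over G with the same bound C. -/
noncomputable section

def HasHSFactorization {G : Type} [Group G] (u : G → ℂ) (C : ℝ) : Prop :=
  ∃ (H : Type) (_ : NormedAddCommGroup H) (_ : InnerProductSpace ℂ H)
    (P Q : G → H) (a b : ℝ),
      (∀ x, ‖P x‖ ≤ a) ∧ (∀ y, ‖Q y‖ ≤ b) ∧ a * b ≤ C ∧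
      ∀ x y, u (y⁻¹ * x) = (inner ℂ (P x) (Q y) : ℂ)

/-- Extending a function on a subgroup by zero preserves Hilbert-space factorization bounds. -/
theorem subgroup_extension_factorization {G : Type} [Group G] (H : Subgroup G)
    [DecidablePred (· ∈ H)] (u : H → ℂ) (C : ℝ)
    (hu : HasHSFactorization u C) :
    HasHSFactorization (fun x : G => if hx : x ∈ H then u ⟨x, hx⟩ else 0) C := by
  classical
  obtain ⟨𝓗, i1, i2, P, Q, a, b, hP, hQ, hab, hfac⟩ := hu
  -- representative of the coset of x, and the element of H it determines
  have hmem : ∀ x : G, ((QuotientGroup.mk x : G ⧸ H)).out⁻¹ * x ∈ H := by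
    intro x
    rw [← QuotientGroup.eq]
    exact QuotientGroup.out_eq' _
  refine ⟨lp (fun _ : G ⧸ H => 𝓗) 2, inferInstance, inferInstance,
    (fun x => lp.single 2 (QuotientGroup.mk x)
      (P (⟨_, hmem x⟩ : H))),
    (fun y => lp.single 2 (QuotientGroup.mk y)
      (Q (⟨_, hmem y⟩ : H))), a, b, ?_, ?_, hab, ?_⟩
  · intro x
    beta_reduce; rw [lp.norm_single (E := fun _ : G ⧸ H => 𝓗) (p := 2) (by norm_num) _ (P (⟨_, hmem x⟩ : H))]
    exact hP _
  · intro y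
    beta_reduce; rw [lp.norm_single (E := fun _ : G ⧸ H => 𝓗) (p := 2) (by norm_num) _ (Q (⟨_, hmem y⟩ : H))]
    exact hQ _
  · intro x y
    dsimp only
    rw [lp.inner_single_left]
    by_cases h : (QuotientGroup.mk x : G ⧸ H) = QuotientGroup.mk y
    · have hxy : y⁻¹ * x ∈ H := by
        rw [← QuotientGroup.eq]; exact h.symm
      have key : (⟨_, hmem y⟩ : H)⁻¹ * (⟨_, hmem x⟩ : H) = (⟨y⁻¹ * x, hxy⟩ : H) := by
        ext
        push_cast
        rw [h]
        group
      have hval : (lp.single 2 ((QuotientGroup.mk y : G ⧸ H))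
          (Q (⟨_, hmem y⟩ : H)) : lp (fun _ : G ⧸ H => 𝓗) 2) (QuotientGroup.mk x)
          = Q (⟨_, hmem y⟩ : H) := by
        rw [h]
        exact lp.single_apply_self _ _ _
      rw [dif_pos hxy, hval, ← key, hfac]
    · have hxy : y⁻¹ * x ∉ H := by
        rw [← QuotientGroup.eq]
        exact fun hc => h hc.symm
      rw [dif_neg hxy, lp.single_apply_ne 2 _ _ h, inner_zero_right]
end
end

section
/- Let G be a discrete group with the weak Haagerup property witnessed by functions in B₂(G) ∩ c₀(G) of norm at most C. Formally: suppose for every finite set F ⊆ G and ε > 0 there is u : G → ℂ vanishing at infinity, admitting a Hilbert-space factorization with bound ≤ C, and with |u(g) − 1| ≤ ε for g ∈ F. Then for every finite F ⊆ G and ε > 0 there exists w : G → ℂ vanishing at infinity, with Hilbert-space factorization bound ≤ C + ε, such that w(x) = 1 for all x ∈ F. -/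
noncomputable section

def VanishesAtInfinity {G : Type} (u : G → ℂ) : Prop :=
  ∀ δ : ℝ, 0 < δ → {g : G | δ ≤ ‖u g‖}.Finite

/-- Any HS factorization can be balanced: same bound on both sides. -/
theorem balanced_factorization {G : Type} [Group G] {u : G → ℂ} {C : ℝ}
    (h : HasHSFactorization u C) :
    ∃ (H : Type) (_ : NormedAddCommGroup H) (_ : InnerProductSpace ℂ H)
      (P Q : G → H) (a : ℝ), 0 ≤ a ∧
      (∀ x, ‖P x‖ ≤ a) ∧ (∀ y, ‖Q y‖ ≤ a) ∧ a * a ≤ C ∧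
      ∀ x y, u (y⁻¹ * x) = (inner ℂ (P x) (Q y) : ℂ) := by
  obtain ⟨H, i1, i2, P, Q, a, b, hP, hQ, hab, hker⟩ := h
  have ha : 0 ≤ a := le_trans (norm_nonneg (P 1)) (hP 1)
  have hb : 0 ≤ b := le_trans (norm_nonneg (Q 1)) (hQ 1)
  rcases eq_or_lt_of_le ha with ha0 | ha0
  · -- a = 0 : then P = 0 and u = 0
    refine ⟨H, i1, i2, 0, 0, 0, le_refl 0, by simp, by simp, ?_, ?_⟩
    · simpa [← ha0] using hab
    · intro x y
      have hPx : P x = 0 := by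
        have := hP x; rw [← ha0] at this
        exact norm_le_zero_iff.mp this
      rw [hker x y, hPx]
      simp
  rcases eq_or_lt_of_le hb with hb0 | hb0
  · refine ⟨H, i1, i2, 0, 0, 0, le_refl 0, by simp, by simp, ?_, ?_⟩
    · have : a * b = 0 := by rw [← hb0, mul_zero]
      simpa [this] using hab
    · intro x y
      have hQy : Q y = 0 := by
        have := hQ y; rw [← hb0] at this
        exact norm_le_zero_iff.mp this
      rw [hker x y, hQy]
      simp
  · -- a, b > 0
    refine ⟨H, i1, i2,
      (fun x => ((Real.sqrt (b / a) : ℂ)) • P x),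
      (fun y => ((Real.sqrt (a / b) : ℂ)) • Q y),
      Real.sqrt (a * b), Real.sqrt_nonneg _, ?_, ?_, ?_, ?_⟩
    · intro x
      have h1 : ‖((Real.sqrt (b / a) : ℂ)) • P x‖ = Real.sqrt (b / a) * ‖P x‖ := by
        rw [norm_smul, Complex.norm_real, Real.norm_eq_abs,
          abs_of_nonneg (Real.sqrt_nonneg _)]
      rw [h1]
      calc Real.sqrt (b / a) * ‖P x‖ ≤ Real.sqrt (b / a) * a :=
            mul_le_mul_of_nonneg_left (hP x) (Real.sqrt_nonneg _)
        _ = Real.sqrt (a * b) := by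
            rw [show a = Real.sqrt (a * a) from (Real.sqrt_mul_self ha).symm,
              ← Real.sqrt_mul (by positivity)]
            congr 1
            field_simp
            ring_nf; rw [Real.sq_sqrt (by positivity)]
    · intro y
      have h1 : ‖((Real.sqrt (a / b) : ℂ)) • Q y‖ = Real.sqrt (a / b) * ‖Q y‖ := by
        rw [norm_smul, Complex.norm_real, Real.norm_eq_abs,
          abs_of_nonneg (Real.sqrt_nonneg _)]
      rw [h1]
      calc Real.sqrt (a / b) * ‖Q y‖ ≤ Real.sqrt (a / b) * b :=
            mul_le_mul_of_nonneg_left (hQ y) (Real.sqrt_nonneg _)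
        _ = Real.sqrt (a * b) := by
            rw [show b = Real.sqrt (b * b) from (Real.sqrt_mul_self hb).symm,
              ← Real.sqrt_mul (by positivity)]
            congr 1
            field_simp
            ring_nf; rw [Real.sq_sqrt (by positivity)]
    · rw [Real.mul_self_sqrt (by positivity)]
      exact hab
    · intro x y
      rw [hker x y, inner_smul_left, inner_smul_right]
      rw [Complex.conj_ofReal, ← mul_assoc, ← Complex.ofReal_mul,
        ← Real.sqrt_mul (by positivity)]
      have : b / a * (a / b) = 1 := by field_simp
      rw [this, Real.sqrt_one]
      simp

set_option maxHeartbeats 1000000 in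
/-- From weak Haagerup witnesses with bound `C` approximating 1 on finite sets one gets,
for every finite set `F` and `ε > 0`, a witness with bound `C + ε` which is exactly 1 on `F`. -/
theorem exact_one_on_finite_sets {G : Type} [Group G] (C : ℝ)
    (h : ∀ (F : Finset G) (ε : ℝ), 0 < ε → ∃ u : G → ℂ,
      VanishesAtInfinity u ∧ HasHSFactorization u C ∧ ∀ g ∈ F, ‖u g - 1‖ ≤ ε) :
    ∀ (F : Finset G) (ε : ℝ), 0 < ε → ∃ w : G → ℂ,
      VanishesAtInfinity w ∧ HasHSFactorization w (C + ε) ∧ ∀ x ∈ F, w x = 1 := by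
  classical
  intro F ε hε
  set ε' : ℝ := ε / (F.card + 1) with hε'def
  have hε' : 0 < ε' := by positivity
  obtain ⟨u, huvan, hufac, huclose⟩ := h F ε' hε'
  obtain ⟨H, i1, i2, P, Q, a, ha, hP, hQ, haa, hker⟩ := balanced_factorization hufac
  -- the witness
  refine ⟨fun g => if g ∈ F then 1 else u g, ?_, ?_, ?_⟩
  · -- vanishes at infinity
    intro δ hδ
    refine ((huvan δ hδ).union F.finite_toSet).subset ?_
    intro g hg
    by_cases hgF : g ∈ F
    · exact Or.inr hgF
    · left; simpa [hgF] using hg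
  · -- factorization
    -- correction data
    set c : ↥F → ℂ := fun s => 1 - u ↑s with hc
    set r : ↥F → ℝ := fun s => Real.sqrt ‖c s‖ with hr
    set γ : ↥F → ℂ := fun s => if c s = 0 then 0 else c s / (r s : ℂ) with hγ
    have hrγ : ∀ s, (starRingEnd ℂ) (r s : ℂ) * γ s = c s := by
      intro s
      rw [Complex.conj_ofReal]
      by_cases h0 : c s = 0
      · simp [hγ, h0]
      · have hrpos : (0:ℝ) < r s := Real.sqrt_pos.mpr (by simpa using h0)
        simp only [hγ, if_neg h0]
        have : ((r s : ℝ) : ℂ) ≠ 0 := by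
          exact_mod_cast (Real.sqrt_pos.mpr (by simpa using h0)).ne'
        field_simp
    have hγnorm : ∀ s, ‖γ s‖ = r s := by
      intro s
      by_cases h0 : c s = 0
      · simp [hγ, hr, h0]
      · have hrpos : (0:ℝ) < r s := Real.sqrt_pos.mpr (by simpa using h0)
        simp only [hγ, if_neg h0, norm_div, Complex.norm_real, Real.norm_eq_abs,
          abs_of_pos hrpos]
        rw [div_eq_iff hrpos.ne']
        simp only [hr]
        exact (Real.mul_self_sqrt (norm_nonneg _)).symm
    -- inner product of sums of singles
    have key : ∀ (g1 g2 : ↥F → ℂ) (m1 m2 : ↥F → G),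
        (inner ℂ (∑ s : ↥F, lp.single (E := fun _ : ↥F × G => ℂ) 2 ((s, m1 s) : ↥F × G) (g1 s))
               (∑ t : ↥F, lp.single (E := fun _ : ↥F × G => ℂ) 2 ((t, m2 t) : ↥F × G) (g2 t)) : ℂ)
        = ∑ s : ↥F, if m1 s = m2 s then (starRingEnd ℂ) (g1 s) * g2 s else 0 := by
      intro g1 g2 m1 m2
      rw [sum_inner]
      refine Finset.sum_congr rfl ?_
      intro s _
      rw [inner_sum]
      have single_single : ∀ (i j : ↥F × G) (x y : ℂ),
          (inner ℂ (lp.single (E := fun _ : ↥F × G => ℂ) 2 i x)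
                 (lp.single (E := fun _ : ↥F × G => ℂ) 2 j y) : ℂ)
          = if i = j then (starRingEnd ℂ) x * y else 0 := by
        intro i j x y
        rw [lp.inner_single_left]
        by_cases hij : i = j
        · subst hij
          rw [lp.single_apply_self, if_pos rfl, RCLike.inner_apply, mul_comm]
        · rw [lp.single_apply_ne _ _ _ hij, if_neg hij]
          simp
      have step : ∀ t : ↥F,
          (inner ℂ (lp.single (E := fun _ : ↥F × G => ℂ) 2 ((s, m1 s) : ↥F × G) (g1 s))
                 (lp.single (E := fun _ : ↥F × G => ℂ) 2 ((t, m2 t) : ↥F × G) (g2 t)) : ℂ)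
          = if t = s then (if m1 s = m2 s then (starRingEnd ℂ) (g1 s) * g2 s else 0)
            else 0 := by
        intro t
        rw [single_single]
        by_cases hts : t = s
        · subst hts
          by_cases hm : m1 t = m2 t
          · simp [hm]
          · simp [Prod.ext_iff, hm]
        · have : ((s, m1 s) : ↥F × G) ≠ (t, m2 t) := by
            simp [Prod.ext_iff]
            intro hst
            exact absurd hst.symm hts
          simp [this, hts]
      rw [Finset.sum_congr rfl (fun t _ => step t), Finset.sum_ite_eq' Finset.univ s]
      simp
    -- vectors
    set Pv := fun x => ∑ s : ↥F, lp.single (E := fun _ : ↥F × G => ℂ) 2 ((s, x) : ↥F × G) ((r s : ℂ))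
      with hPv
    set Qv := fun y => ∑ s : ↥F, lp.single (E := fun _ : ↥F × G => ℂ) 2 ((s, y * ↑s) : ↥F × G) (γ s)
      with hQv
    set t : ℝ := Real.sqrt (∑ s : ↥F, ‖c s‖) with ht
    have htnn : 0 ≤ t := Real.sqrt_nonneg _
    have htt : t * t = ∑ s : ↥F, ‖c s‖ :=
      Real.mul_self_sqrt (Finset.sum_nonneg fun s _ => norm_nonneg _)
    have hPvnorm : ∀ x, ‖Pv x‖ ≤ t := by
      intro x
      have h1 : ‖Pv x‖ ^ 2 = ∑ s : ↥F, ‖c s‖ := by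
        rw [@norm_sq_eq_re_inner ℂ, hPv, key, map_sum]
        refine Finset.sum_congr rfl ?_
        intro s _
        have hnorm : ‖((r s : ℝ) : ℂ)‖ = r s := by
          rw [Complex.norm_real, Real.norm_eq_abs,
            abs_of_nonneg (Real.sqrt_nonneg _)]
        rw [if_pos rfl, RCLike.conj_mul, hnorm]
        norm_cast
        simp only [hr]
        exact Real.sq_sqrt (norm_nonneg _)
      have : ‖Pv x‖ ^ 2 = t ^ 2 := by rw [h1, sq, htt]
      calc ‖Pv x‖ = Real.sqrt (‖Pv x‖ ^ 2) := (Real.sqrt_sq (norm_nonneg _)).symm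
        _ = Real.sqrt (t ^ 2) := by rw [this]
        _ = t := Real.sqrt_sq htnn
        _ ≤ t := le_refl t
    have hQvnorm : ∀ y, ‖Qv y‖ ≤ t := by
      intro y
      have h1 : ‖Qv y‖ ^ 2 = ∑ s : ↥F, ‖c s‖ := by
        rw [@norm_sq_eq_re_inner ℂ, hQv, key, map_sum]
        refine Finset.sum_congr rfl ?_
        intro s _
        rw [if_pos rfl, RCLike.conj_mul, hγnorm s]
        norm_cast
        simp only [hr]
        exact Real.sq_sqrt (norm_nonneg _)
      have : ‖Qv y‖ ^ 2 = t ^ 2 := by rw [h1, sq, htt]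
      calc ‖Qv y‖ = Real.sqrt (‖Qv y‖ ^ 2) := (Real.sqrt_sq (norm_nonneg _)).symm
        _ = Real.sqrt (t ^ 2) := by rw [this]
        _ = t := Real.sqrt_sq htnn
        _ ≤ t := le_refl t
    have hinnerPQ : ∀ x y, (inner ℂ (Pv x) (Qv y) : ℂ)
        = if hm : y⁻¹ * x ∈ F then c ⟨y⁻¹ * x, hm⟩ else 0 := by
      intro x y
      rw [hPv, hQv, key]
      have hcond : ∀ s : ↥F, (x = y * ↑s) ↔ (↑s = y⁻¹ * x) := by
        intro s
        constructor
        · intro hx; rw [hx]; group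
        · intro hx
          rw [hx]; group
      by_cases hm : y⁻¹ * x ∈ F
      · have : ∀ s : ↥F,
            (if x = y * ↑s then (starRingEnd ℂ) ((r s : ℂ)) * γ s else 0)
            = if s = ⟨y⁻¹ * x, hm⟩ then c s else 0 := by
          intro s
          by_cases hs : s = ⟨y⁻¹ * x, hm⟩
          · subst hs
            have : x = y * (↑(⟨y⁻¹ * x, hm⟩ : ↥F)) := by
              simp only []
              group
            rw [if_pos this, if_pos rfl, hrγ]
          · have : ¬ (x = y * ↑s) := by
              intro hx
              apply hs
              apply Subtype.ext
              exact ((hcond s).mp hx)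
            rw [if_neg this, if_neg hs]
        rw [Finset.sum_congr rfl (fun s _ => this s),
          Finset.sum_ite_eq' Finset.univ (⟨y⁻¹ * x, hm⟩ : ↥F)]
        simp [hm]
      · rw [dif_neg hm]
        refine Finset.sum_eq_zero ?_
        intro s _
        have : ¬ (x = y * ↑s) := by
          intro hx
          exact hm (((hcond s).mp hx) ▸ s.2)
        rw [if_neg this]
    -- combined space
    refine ⟨WithLp 2 (H × ↥(lp (fun _ : ↥F × G => ℂ) 2)), inferInstance, inferInstance,
      (fun x => (WithLp.equiv 2 (H × ↥(lp (fun _ : ↥F × G => ℂ) 2))).symm (P x, Pv x)),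
      (fun y => (WithLp.equiv 2 (H × ↥(lp (fun _ : ↥F × G => ℂ) 2))).symm (Q y, Qv y)),
      Real.sqrt (a * a + t * t), Real.sqrt (a * a + t * t), ?_, ?_, ?_, ?_⟩
    · intro x
      have h1 : ‖(WithLp.equiv 2 (H × ↥(lp (fun _ : ↥F × G => ℂ) 2))).symm (P x, Pv x)‖ ^ 2
          = ‖P x‖ ^ 2 + ‖Pv x‖ ^ 2 := by
        rw [WithLp.prod_norm_sq_eq_of_L2]
        simp
      have h2 : ‖P x‖ ^ 2 + ‖Pv x‖ ^ 2 ≤ a * a + t * t := by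
        have := hP x
        have := hPvnorm x
        have hn1 : ‖P x‖ ^ 2 ≤ a * a := by nlinarith [norm_nonneg (P x)]
        have hn2 : ‖Pv x‖ ^ 2 ≤ t * t := by nlinarith [norm_nonneg (Pv x)]
        linarith
      calc ‖(WithLp.equiv 2 (H × ↥(lp (fun _ : ↥F × G => ℂ) 2))).symm (P x, Pv x)‖
          = Real.sqrt (‖(WithLp.equiv 2 (H × ↥(lp (fun _ : ↥F × G => ℂ) 2))).symm (P x, Pv x)‖ ^ 2) :=
            (Real.sqrt_sq (norm_nonneg _)).symm
        _ ≤ Real.sqrt (a * a + t * t) := by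
            rw [h1]; exact Real.sqrt_le_sqrt h2
    · intro y
      have h1 : ‖(WithLp.equiv 2 (H × ↥(lp (fun _ : ↥F × G => ℂ) 2))).symm (Q y, Qv y)‖ ^ 2
          = ‖Q y‖ ^ 2 + ‖Qv y‖ ^ 2 := by
        rw [WithLp.prod_norm_sq_eq_of_L2]
        simp
      have h2 : ‖Q y‖ ^ 2 + ‖Qv y‖ ^ 2 ≤ a * a + t * t := by
        have := hQ y
        have := hQvnorm y
        have hn1 : ‖Q y‖ ^ 2 ≤ a * a := by nlinarith [norm_nonneg (Q y)]
        have hn2 : ‖Qv y‖ ^ 2 ≤ t * t := by nlinarith [norm_nonneg (Qv y)]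
        linarith
      calc ‖(WithLp.equiv 2 (H × ↥(lp (fun _ : ↥F × G => ℂ) 2))).symm (Q y, Qv y)‖
          = Real.sqrt (‖(WithLp.equiv 2 (H × ↥(lp (fun _ : ↥F × G => ℂ) 2))).symm (Q y, Qv y)‖ ^ 2) :=
            (Real.sqrt_sq (norm_nonneg _)).symm
        _ ≤ Real.sqrt (a * a + t * t) := by
            rw [h1]; exact Real.sqrt_le_sqrt h2
    · rw [Real.mul_self_sqrt (by positivity)]
      have hsum : ∑ s : ↥F, ‖c s‖ ≤ F.card * ε' := by
        calc ∑ s : ↥F, ‖c s‖ ≤ ∑ _s : ↥F, ε' := by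
              refine Finset.sum_le_sum ?_
              intro s _
              have := huclose ↑s s.2
              rw [hc]
              calc ‖1 - u ↑s‖ = ‖u ↑s - 1‖ := norm_sub_rev _ _
                _ ≤ ε' := this
          _ = F.card * ε' := by
              rw [Finset.sum_const, Finset.card_univ, Fintype.card_coe, nsmul_eq_mul]
      have htε : t * t ≤ ε := by
        rw [htt]
        calc ∑ s : ↥F, ‖c s‖ ≤ F.card * ε' := hsum
          _ ≤ ε := by
              rw [hε'def]
              have hn : (0:ℝ) < (F.card:ℝ) + 1 := by positivity
              calc (F.card:ℝ) * (ε / ((F.card:ℝ)+1))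
                  ≤ ((F.card:ℝ)+1) * (ε / ((F.card:ℝ)+1)) :=
                    mul_le_mul_of_nonneg_right (by linarith)
                      (le_of_lt (div_pos hε hn))
                _ = ε := by field_simp
      linarith
    · intro x y
      have hip : (inner ℂ ((WithLp.equiv 2 (H × ↥(lp (fun _ : ↥F × G => ℂ) 2))).symm (P x, Pv x))
          ((WithLp.equiv 2 (H × ↥(lp (fun _ : ↥F × G => ℂ) 2))).symm (Q y, Qv y)) : ℂ)
          = inner ℂ (P x) (Q y) + inner ℂ (Pv x) (Qv y) := by
        rw [WithLp.prod_inner_apply]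
        simp
      rw [hip, ← hker x y, hinnerPQ x y]
      by_cases hm : y⁻¹ * x ∈ F <;> simp [hm, hc]
  · intro x hx
    simp [hx]
end
end

section
/- Let G be a countable discrete group. Then G has the weak Haagerup property with constant 1 if and only if there exists a proper function ψ : G → [0,∞) such that for every t > 0 the function e^{−tψ} admits a Hilbert-space factorization with bound ≤ 1. (Properness means {g : ψ(g) ≤ R} is finite for every R.) -/
noncomputable section

/-- `G` has the weak Haagerup property with constant 1. -/
def WeakHaagerupPropertyOne (G : Type) [Group G] : Prop :=
  ∀ (F : Finset G) (ε : ℝ), 0 < ε → ∃ u : G → ℂ,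
    VanishesAtInfinity u ∧ HasHSFactorization u 1 ∧ ∀ g ∈ F, ‖u g - 1‖ ≤ ε

namespace WHaux

open Complex Finset Filter
open ComplexOrder

variable {X : Type}

/-- Hermitian positive semidefinite kernel. -/
def IsPSDK (K : X → X → ℂ) : Prop :=
  (∀ i j, K j i = (starRingEnd ℂ) (K i j)) ∧
  ∀ (s : Finset X) (c : X → ℂ),
    0 ≤ ∑ i ∈ s, ∑ j ∈ s, (starRingEnd ℂ) (c i) * c j * K i j

theorem conj_nonneg' {z : ℂ} (h : 0 ≤ z) : 0 ≤ (starRingEnd ℂ) z := by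
  rw [Complex.le_def] at h ⊢
  refine ⟨by simpa using h.1, by simp [← h.2]⟩

theorem isPSDK_one : IsPSDK (fun (_ _ : X) => (1 : ℂ)) := by
  refine ⟨fun i j => by simp, fun s c => ?_⟩
  have e1 : star (∑ i ∈ s, c i) * (∑ j ∈ s, c j)
      = ∑ i ∈ s, ∑ j ∈ s, (starRingEnd ℂ) (c i) * c j * 1 := by
    rw [star_sum, Finset.sum_mul_sum]
    simp [mul_one]
  rw [← e1]
  exact star_mul_self_nonneg _

theorem IsPSDK.conj {K : X → X → ℂ} (h : IsPSDK K) :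
    IsPSDK (fun i j => (starRingEnd ℂ) (K i j)) := by
  refine ⟨fun i j => by simp [h.1 i j], fun s c => ?_⟩
  have key : ∑ i ∈ s, ∑ j ∈ s, (starRingEnd ℂ) (c i) * c j * (starRingEnd ℂ) (K i j)
      = (starRingEnd ℂ) (∑ i ∈ s, ∑ j ∈ s,
          (starRingEnd ℂ) ((starRingEnd ℂ) (c i)) * (starRingEnd ℂ) (c j) * K i j) := by
    rw [map_sum]
    refine Finset.sum_congr rfl fun i _ => ?_
    rw [map_sum]
    refine Finset.sum_congr rfl fun j _ => ?_
    simp only [map_mul, Complex.conj_conj]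
  rw [key]
  exact conj_nonneg' (h.2 s _)

theorem IsPSDK.diag_im {K : X → X → ℂ} (h : IsPSDK K) (z : X) : (K z z).im = 0 := by
  have h2 := congrArg Complex.im (h.1 z z)
  simp at h2; linarith

theorem IsPSDK.diag_re_nonneg {K : X → X → ℂ} (h : IsPSDK K) (z : X) : 0 ≤ (K z z).re := by
  have h2 := h.2 {z} (fun _ => 1)
  simp only [Finset.sum_singleton, map_one, one_mul] at h2
  rw [Complex.le_def] at h2
  simpa using h2.1

theorem IsPSDK.mul {K K' : X → X → ℂ} (h : IsPSDK K) (h' : IsPSDK K') :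
    IsPSDK (fun i j => K i j * K' i j) := by
  classical
  refine ⟨fun i j => by simp [h.1 i j, h'.1 i j], fun s c => ?_⟩
  have hpsd : ∀ (L : X → X → ℂ), IsPSDK L →
      Matrix.PosSemidef (fun i j => L i j : Matrix s s ℂ) := by
    intro L hL
    refine Matrix.PosSemidef.of_dotProduct_mulVec_nonneg ?_ ?_
    · refine Matrix.IsHermitian.ext fun i j => ?_
      simp [hL.1 j i]
    · intro x
      set c' : X → ℂ := fun a => if ha : a ∈ s then x ⟨a, ha⟩ else 0 with hc'
      have h2 := hL.2 s c'
      have e : ∑ i ∈ s, ∑ j ∈ s, (starRingEnd ℂ) (c' i) * c' j * L i j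
          = dotProduct (star x) (Matrix.mulVec (fun i j => L i j : Matrix s s ℂ) x) := by
        simp only [dotProduct, Matrix.mulVec]
        rw [← Finset.sum_coe_sort s]
        refine Finset.sum_congr rfl fun i _ => ?_
        rw [← Finset.sum_coe_sort s, Finset.mul_sum]
        refine Finset.sum_congr rfl fun j _ => ?_
        simp only [hc', dif_pos i.2, dif_pos j.2, Pi.star_apply, RCLike.star_def]
        ring
      rw [e] at h2
      exact h2
  open scoped MatrixOrder Matrix.Norms.L2Operator in
  obtain ⟨B, hB⟩ := CStarAlgebra.nonneg_iff_eq_star_mul_self.mp (hpsd K h).nonneg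
  open scoped MatrixOrder Matrix.Norms.L2Operator in
  obtain ⟨C, hC⟩ := CStarAlgebra.nonneg_iff_eq_star_mul_self.mp (hpsd K' h').nonneg
  have entry : ∀ i j : s, K i j = ∑ r : s, (starRingEnd ℂ) (B r i) * B r j := by
    intro i j
    have := congrFun (congrFun hB i) j
    simpa [Matrix.mul_apply, Matrix.conjTranspose_apply, RCLike.star_def] using this
  have entry' : ∀ i j : s, K' i j = ∑ r : s, (starRingEnd ℂ) (C r i) * C r j := by
    intro i j
    have := congrFun (congrFun hC i) j
    simpa [Matrix.mul_apply, Matrix.conjTranspose_apply, RCLike.star_def] using this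
  have main : ∑ i ∈ s, ∑ j ∈ s, (starRingEnd ℂ) (c i) * c j * (K i j * K' i j)
      = ∑ r : s, ∑ q : s,
          star (∑ i : s, c i * B r i * C q i) * (∑ j : s, c j * B r j * C q j) := by
    rw [← Finset.sum_coe_sort s]
    calc ∑ i : s, ∑ j ∈ s, (starRingEnd ℂ) (c (i:X)) * c j * (K i j * K' i j)
        = ∑ i : s, ∑ j : s, ∑ r : s, ∑ q : s,
            ((starRingEnd ℂ) (c (i:X) * B r i * C q i)) * (c (j:X) * B r j * C q j) := by
          refine Finset.sum_congr rfl fun i _ => ?_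
          rw [← Finset.sum_coe_sort s]
          refine Finset.sum_congr rfl fun j _ => ?_
          rw [entry i j, entry' i j, Finset.sum_mul_sum]
          rw [Finset.mul_sum]
          refine Finset.sum_congr rfl fun r _ => ?_
          rw [Finset.mul_sum]
          refine Finset.sum_congr rfl fun q _ => ?_
          simp only [map_mul]
          ring
      _ = ∑ i : s, ∑ r : s, ∑ j : s, ∑ q : s,
            ((starRingEnd ℂ) (c (i:X) * B r i * C q i)) * (c (j:X) * B r j * C q j) := by
          refine Finset.sum_congr rfl fun i _ => ?_
          exact Finset.sum_comm
      _ = ∑ r : s, ∑ i : s, ∑ j : s, ∑ q : s,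
            ((starRingEnd ℂ) (c (i:X) * B r i * C q i)) * (c (j:X) * B r j * C q j) := by
          exact Finset.sum_comm
      _ = ∑ r : s, ∑ i : s, ∑ q : s, ∑ j : s,
            ((starRingEnd ℂ) (c (i:X) * B r i * C q i)) * (c (j:X) * B r j * C q j) := by
          refine Finset.sum_congr rfl fun r _ => Finset.sum_congr rfl fun i _ => ?_
          exact Finset.sum_comm
      _ = ∑ r : s, ∑ q : s, ∑ i : s, ∑ j : s,
            ((starRingEnd ℂ) (c (i:X) * B r i * C q i)) * (c (j:X) * B r j * C q j) := by
          refine Finset.sum_congr rfl fun r _ => ?_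
          exact Finset.sum_comm
      _ = ∑ r : s, ∑ q : s,
            star (∑ i : s, c i * B r i * C q i) * (∑ j : s, c j * B r j * C q j) := by
          refine Finset.sum_congr rfl fun r _ => Finset.sum_congr rfl fun q _ => ?_
          rw [star_sum, Finset.sum_mul_sum]
          simp only [RCLike.star_def]
  rw [main]
  refine Finset.sum_nonneg fun r _ => Finset.sum_nonneg fun q _ => star_mul_self_nonneg _

theorem IsPSDK.norm_le_one {K : X → X → ℂ} (h : IsPSDK K)
    (hd : ∀ z, (K z z).re ≤ 1) (i j : X) : ‖K i j‖ ≤ 1 := by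
  classical
  by_cases hij : i = j
  · subst hij
    have h1 : K i i = ((K i i).re : ℂ) := Complex.ext (by simp) (by simp [h.diag_im i])
    rw [h1]
    rw [Complex.norm_real, Real.norm_eq_abs, _root_.abs_of_nonneg (h.diag_re_nonneg i)]
    exact hd i
  · set c : X → ℂ := fun a => if a = i then 1 else if a = j then -((starRingEnd ℂ) (K i j)) else 0
      with hc
    have h2 := h.2 {i, j} c
    rw [Finset.sum_pair hij] at h2
    rw [Finset.sum_pair hij, Finset.sum_pair hij] at h2
    have ci : c i = 1 := by simp [hc]
    have cj : c j = -((starRingEnd ℂ) (K i j)) := by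
      simp only [hc]
      rw [if_neg (fun hh => hij hh.symm)]
      simp
    rw [ci, cj, h.1 i j] at h2
    set z := K i j with hz
    have expand : (starRingEnd ℂ) 1 * 1 * K i i + (starRingEnd ℂ) 1 * (-(starRingEnd ℂ) z) * z
        + ((starRingEnd ℂ) (-(starRingEnd ℂ) z)) * 1 * ((starRingEnd ℂ) z)
        + ((starRingEnd ℂ) (-(starRingEnd ℂ) z)) * (-(starRingEnd ℂ) z) * K j j
        = K i i - (2 * Complex.normSq z : ℝ) + (Complex.normSq z : ℝ) * K j j := by
      have hcz : ((Complex.normSq z : ℝ) : ℂ) = (starRingEnd ℂ) z * z := by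
        rw [mul_comm, Complex.mul_conj]
      simp only [map_one, one_mul, map_neg, Complex.conj_conj]
      push_cast
      rw [hcz]
      ring
    rw [show (starRingEnd ℂ) 1 * 1 * K i i + (starRingEnd ℂ) 1 * (-(starRingEnd ℂ) z) * z
        + (((starRingEnd ℂ) (-(starRingEnd ℂ) z)) * 1 * ((starRingEnd ℂ) z)
        + ((starRingEnd ℂ) (-(starRingEnd ℂ) z)) * (-(starRingEnd ℂ) z) * K j j)
        = (starRingEnd ℂ) 1 * 1 * K i i + (starRingEnd ℂ) 1 * (-(starRingEnd ℂ) z) * z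
        + ((starRingEnd ℂ) (-(starRingEnd ℂ) z)) * 1 * ((starRingEnd ℂ) z)
        + ((starRingEnd ℂ) (-(starRingEnd ℂ) z)) * (-(starRingEnd ℂ) z) * K j j by ring] at h2
    rw [expand] at h2
    rw [Complex.le_def] at h2
    have hre := h2.1
    simp only [Complex.add_re, Complex.sub_re, Complex.zero_re, Complex.ofReal_re,
      Complex.mul_re, Complex.ofReal_im] at hre
    have hn : Complex.normSq z = ‖z‖^2 := (Complex.sq_norm z).symm
    have h3 : 0 ≤ (K i i).re - 2 * ‖z‖^2 + ‖z‖^2 * (K j j).re := by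
      rw [← hn]; linarith [hre]
    have h4 : ‖z‖^2 * (K j j).re ≤ ‖z‖^2 * 1 :=
      mul_le_mul_of_nonneg_left (hd j) (sq_nonneg _)
    have h5 : ‖z‖^2 ≤ 1 := by nlinarith [hd i]
    nlinarith [norm_nonneg z]

/-! ### GNS construction -/

variable (K : X → X → ℂ)

/-- GNS sesquilinear form on finitely supported functions. -/
def bf (f g : X →₀ ℂ) : ℂ :=
  f.sum fun i a => (starRingEnd ℂ) a * (g.sum fun j b => b * K i j)

theorem bf_eq_sum (f g : X →₀ ℂ) {s t : Finset X} (hs : f.support ⊆ s) (ht : g.support ⊆ t) :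
    bf K f g = ∑ i ∈ s, ∑ j ∈ t, (starRingEnd ℂ) (f i) * g j * K i j := by
  have inner_eq : ∀ i, (g.sum fun j b => b * K i j) = ∑ j ∈ t, g j * K i j := by
    intro i
    rw [Finsupp.sum]
    exact Finset.sum_subset ht (fun j _ hj => by
      rw [Finsupp.notMem_support_iff.mp hj, zero_mul])
  rw [bf, Finsupp.sum]
  calc ∑ i ∈ f.support, (starRingEnd ℂ) (f i) * (g.sum fun j b => b * K i j)
      = ∑ i ∈ s, (starRingEnd ℂ) (f i) * (g.sum fun j b => b * K i j) := by
        exact Finset.sum_subset hs (fun i _ hi => by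
          rw [Finsupp.notMem_support_iff.mp hi, map_zero, zero_mul])
    _ = ∑ i ∈ s, ∑ j ∈ t, (starRingEnd ℂ) (f i) * g j * K i j := by
        refine Finset.sum_congr rfl fun i _ => ?_
        rw [inner_eq i, Finset.mul_sum]
        refine Finset.sum_congr rfl fun j _ => ?_
        ring

theorem bf_nonneg (hK : IsPSDK K) (f : X →₀ ℂ) : 0 ≤ bf K f f := by
  rw [bf_eq_sum K f f (le_refl f.support) (le_refl f.support)]
  exact hK.2 f.support f

theorem bf_conj_symm (hK : IsPSDK K) (f g : X →₀ ℂ) :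
    (starRingEnd ℂ) (bf K f g) = bf K g f := by
  classical
  rw [bf_eq_sum K f g (Finset.subset_union_left (s₂ := g.support))
      (Finset.subset_union_right (s₁ := f.support)),
    bf_eq_sum K g f (Finset.subset_union_right (s₁ := f.support))
      (Finset.subset_union_left (s₂ := g.support))]
  rw [map_sum, Finset.sum_comm]
  refine Finset.sum_congr rfl fun j _ => ?_
  rw [map_sum]
  refine Finset.sum_congr rfl fun i _ => ?_
  rw [map_mul, map_mul, Complex.conj_conj, ← hK.1 j i]
  ring

theorem bf_add_left (f f' g : X →₀ ℂ) : bf K (f + f') g = bf K f g + bf K f' g := by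
  classical
  have h1 : (f + f').support ⊆ f.support ∪ f'.support := Finsupp.support_add
  rw [bf_eq_sum K (f + f') g h1 (le_refl _),
    bf_eq_sum K f g (Finset.subset_union_left (s₂ := f'.support)) (le_refl _),
    bf_eq_sum K f' g (Finset.subset_union_right (s₁ := f.support)) (le_refl _),
    ← Finset.sum_add_distrib]
  refine Finset.sum_congr rfl fun i _ => ?_
  rw [← Finset.sum_add_distrib]
  refine Finset.sum_congr rfl fun j _ => ?_
  rw [Finsupp.add_apply, map_add]
  ring

theorem bf_smul_left (c : ℂ) (f g : X →₀ ℂ) :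
    bf K (c • f) g = (starRingEnd ℂ) c * bf K f g := by
  have h1 : (c • f).support ⊆ f.support := Finsupp.support_smul
  rw [bf_eq_sum K (c • f) g h1 (le_refl _), bf_eq_sum K f g (le_refl _) (le_refl _),
    Finset.mul_sum]
  refine Finset.sum_congr rfl fun i _ => ?_
  rw [Finset.mul_sum]
  refine Finset.sum_congr rfl fun j _ => ?_
  rw [Finsupp.smul_apply, smul_eq_mul, map_mul]
  ring

theorem bf_add_right (hK : IsPSDK K) (f g g' : X →₀ ℂ) :
    bf K f (g + g') = bf K f g + bf K f g' := by
  have := bf_add_left K g g' f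
  apply_fun (starRingEnd ℂ) at this
  rw [map_add, bf_conj_symm K hK, bf_conj_symm K hK, bf_conj_symm K hK] at this
  exact this

theorem bf_smul_right (hK : IsPSDK K) (c : ℂ) (f g : X →₀ ℂ) :
    bf K f (c • g) = c * bf K f g := by
  have := bf_smul_left K c g f
  apply_fun (starRingEnd ℂ) at this
  rw [map_mul, bf_conj_symm K hK, bf_conj_symm K hK, Complex.conj_conj] at this
  exact this

theorem bf_zero_right (hK : IsPSDK K) (f : X →₀ ℂ) : bf K f 0 = 0 := by
  have := bf_smul_right K hK 0 f 0
  simpa using this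

theorem bf_cauchy_schwarz (hK : IsPSDK K) (f g : X →₀ ℂ) :
    ‖bf K f g‖ ^ 2 ≤ (bf K f f).re * (bf K g g).re := by
  set d := bf K f g with hd
  set A := (bf K f f).re with hA
  set Bv := (bf K g g).re with hB
  have hA0 : 0 ≤ A := by
    have := bf_nonneg K hK f
    rw [Complex.le_def] at this
    simpa using this.1
  have hB0 : 0 ≤ Bv := by
    have := bf_nonneg K hK g
    rw [Complex.le_def] at this
    simpa using this.1
  have key : ∀ t : ℝ, 0 ≤ A - 2 * t * ‖d‖ ^ 2 + t ^ 2 * ‖d‖ ^ 2 * Bv := by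
    intro t
    set c : ℂ := -(t : ℂ) * (starRingEnd ℂ) d with hc
    have expand : bf K (f + c • g) (f + c • g)
        = bf K f f + c * d + (starRingEnd ℂ) c * (starRingEnd ℂ) d
          + (starRingEnd ℂ) c * c * bf K g g := by
      rw [bf_add_left, bf_add_right K hK, bf_add_right K hK, bf_smul_left, bf_smul_right K hK,
        bf_smul_right K hK, bf_smul_left]
      rw [← bf_conj_symm K hK f g, ← hd]
      ring
    have hnn := bf_nonneg K hK (f + c • g)
    rw [expand] at hnn
    rw [Complex.le_def] at hnn
    have hre := hnn.1
    have hdd : (starRingEnd ℂ) d * d = ((‖d‖ ^ 2 : ℝ) : ℂ) := by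
      rw [mul_comm, Complex.mul_conj, Complex.normSq_eq_norm_sq]
    have hcd : c * d = -(((t : ℝ) * ‖d‖ ^ 2 : ℝ) : ℂ) := by
      rw [hc, show -(t:ℂ) * (starRingEnd ℂ) d * d = -((t:ℂ) * ((starRingEnd ℂ) d * d)) by ring,
        hdd]
      push_cast
      ring
    have hcc : (starRingEnd ℂ) c * (starRingEnd ℂ) d = -(((t : ℝ) * ‖d‖ ^ 2 : ℝ) : ℂ) := by
      rw [hc]
      simp only [map_mul, map_neg, Complex.conj_conj, Complex.conj_ofReal]
      rw [show -(t:ℂ) * d * (starRingEnd ℂ) d = -((t:ℂ) * ((starRingEnd ℂ) d * d)) by ring, hdd]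
      push_cast
      ring
    have hc2 : (starRingEnd ℂ) c * c = (((t ^ 2 * ‖d‖ ^ 2 : ℝ)) : ℂ) := by
      rw [hc]
      simp only [map_mul, map_neg, Complex.conj_conj, Complex.conj_ofReal]
      rw [show -(t:ℂ) * d * (-(t:ℂ) * (starRingEnd ℂ) d) = (t:ℂ)^2 * ((starRingEnd ℂ) d * d)
        by ring, hdd]
      push_cast
      ring
    have hgim : (bf K g g).im = 0 := by
      have := bf_nonneg K hK g
      rw [Complex.le_def] at this
      simpa using this.2.symm
    rw [hcd, hcc, hc2] at hre
    simp only [Complex.add_re, Complex.neg_re, Complex.ofReal_re, Complex.zero_re,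
      Complex.mul_re, Complex.ofReal_im, hgim, mul_zero, zero_mul, sub_zero] at hre
    rw [← hA, ← hB] at hre
    nlinarith [hre]
  by_cases hBv : Bv = 0
  · rcases eq_or_lt_of_le (sq_nonneg ‖d‖ : (0:ℝ) ≤ ‖d‖ ^ 2) with hd0 | hd0
    · rw [hBv, mul_zero]
      exact le_of_eq hd0.symm
    · exfalso
      have hne : ‖d‖ ^ 2 ≠ 0 := ne_of_gt hd0
      have hthis := key ((A + 1) / (2 * ‖d‖ ^ 2))
      rw [hBv] at hthis
      have h2 : 2 * ((A + 1) / (2 * ‖d‖ ^ 2)) * ‖d‖ ^ 2 = A + 1 := by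
        rw [show 2 * ((A + 1) / (2 * ‖d‖ ^ 2)) * ‖d‖ ^ 2
            = ((A + 1) / (2 * ‖d‖ ^ 2)) * (2 * ‖d‖ ^ 2) by ring]
        exact div_mul_cancel₀ _ (by positivity)
      rw [mul_zero, add_zero, h2] at hthis
      linarith
  · have hBpos : 0 < Bv := lt_of_le_of_ne hB0 (Ne.symm hBv)
    have hthis := key (1 / Bv)
    have h1 : 2 * (1 / Bv) * ‖d‖ ^ 2 = 2 * (‖d‖ ^ 2 / Bv) := by ring
    have h2 : (1 / Bv) ^ 2 * ‖d‖ ^ 2 * Bv = ‖d‖ ^ 2 / Bv := by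
      field_simp
    rw [h1, h2] at hthis
    have h3 : ‖d‖ ^ 2 / Bv ≤ A := by linarith
    calc ‖d‖ ^ 2 = (‖d‖ ^ 2 / Bv) * Bv := by field_simp
      _ ≤ A * Bv := mul_le_mul_of_nonneg_right h3 hBpos.le

variable {K}

theorem bf_sub_right (hK : IsPSDK K) (f g g' : X →₀ ℂ) :
    bf K f (g - g') = bf K f g - bf K f g' := by
  rw [sub_eq_add_neg, bf_add_right K hK, show -g' = (-1 : ℂ) • g' by simp,
    bf_smul_right K hK]
  ring

theorem bf_sub_left (hK : IsPSDK K) (f f' g : X →₀ ℂ) :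
    bf K (f - f') g = bf K f g - bf K f' g := by
  rw [sub_eq_add_neg, bf_add_left, show -f' = (-1 : ℂ) • f' by simp, bf_smul_left]
  simp only [map_neg, map_one]
  ring

def nullSub (hK : IsPSDK K) : Submodule ℂ (X →₀ ℂ) where
  carrier := {f | ∀ g, bf K g f = 0}
  add_mem' := by
    intro a b ha hb g
    rw [bf_add_right K hK, ha g, hb g, add_zero]
  zero_mem' := fun g => bf_zero_right K hK g
  smul_mem' := by
    intro c f hf g
    rw [bf_smul_right K hK, hf g, mul_zero]

theorem mem_nullSub_iff (hK : IsPSDK K) (f : X →₀ ℂ) :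
    f ∈ nullSub hK ↔ bf K f f = 0 := by
  constructor
  · intro h; exact h f
  · intro h g
    have hcs := bf_cauchy_schwarz K hK g f
    rw [h] at hcs
    simp only [Complex.zero_re, mul_zero] at hcs
    have hn : ‖bf K g f‖ = 0 := by nlinarith [norm_nonneg (bf K g f)]
    exact norm_eq_zero.mp hn

theorem bf_congr (hK : IsPSDK K) {f f' g g' : X →₀ ℂ}
    (h1 : (Submodule.Quotient.mk f : (X →₀ ℂ) ⧸ nullSub hK) = Submodule.Quotient.mk f')
    (h2 : (Submodule.Quotient.mk g : (X →₀ ℂ) ⧸ nullSub hK) = Submodule.Quotient.mk g') :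
    bf K f g = bf K f' g' := by
  have m1 : f - f' ∈ nullSub hK := (Submodule.Quotient.eq _).mp h1
  have m2 : g - g' ∈ nullSub hK := (Submodule.Quotient.eq _).mp h2
  have e1 : bf K f g - bf K f' g = 0 := by
    rw [← bf_sub_left hK]
    rw [← bf_conj_symm K hK, m1 g, map_zero]
  have e2 : bf K f' g - bf K f' g' = 0 := by
    rw [← bf_sub_right hK]
    exact m2 f'
  linear_combination e1 + e2

def innerQ (hK : IsPSDK K) (q r : (X →₀ ℂ) ⧸ nullSub hK) : ℂ :=
  bf K (Quotient.out q) (Quotient.out r)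

theorem mk_out (hK : IsPSDK K) (q : (X →₀ ℂ) ⧸ nullSub hK) :
    (Submodule.Quotient.mk (Quotient.out q) : (X →₀ ℂ) ⧸ nullSub hK) = q := by
  rw [← Submodule.Quotient.mk''_eq_mk]
  exact Quotient.out_eq' q

theorem innerQ_mk (hK : IsPSDK K) (f g : X →₀ ℂ) :
    innerQ hK (Submodule.Quotient.mk f) (Submodule.Quotient.mk g) = bf K f g :=
  bf_congr hK (by rw [mk_out]) (by rw [mk_out])

def coreQ (hK : IsPSDK K) : InnerProductSpace.Core ℂ ((X →₀ ℂ) ⧸ nullSub hK) where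
  inner := innerQ hK
  conj_inner_symm := by
    intro x y
    exact (bf_conj_symm K hK _ _)
  re_inner_nonneg := by
    intro x
    have := bf_nonneg K hK (Quotient.out x)
    rw [Complex.le_def] at this
    simpa [innerQ] using this.1
  add_left := by
    intro x y z
    obtain ⟨f, rfl⟩ := Submodule.Quotient.mk_surjective _ x
    obtain ⟨g, rfl⟩ := Submodule.Quotient.mk_surjective _ y
    obtain ⟨h, rfl⟩ := Submodule.Quotient.mk_surjective _ z
    show innerQ hK _ _ = innerQ hK _ _ + innerQ hK _ _
    rw [← Submodule.Quotient.mk_add, innerQ_mk, innerQ_mk, innerQ_mk, bf_add_left]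
  smul_left := by
    intro x y r
    obtain ⟨f, rfl⟩ := Submodule.Quotient.mk_surjective _ x
    obtain ⟨g, rfl⟩ := Submodule.Quotient.mk_surjective _ y
    show innerQ hK _ _ = _ * innerQ hK _ _
    rw [← Submodule.Quotient.mk_smul, innerQ_mk, innerQ_mk, bf_smul_left]
  definite := by
    intro x hx
    obtain ⟨f, rfl⟩ := Submodule.Quotient.mk_surjective _ x
    replace hx : innerQ hK (Submodule.Quotient.mk f) (Submodule.Quotient.mk f) = 0 := hx
    rw [innerQ_mk] at hx
    rw [Submodule.Quotient.mk_eq_zero]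
    exact (mem_nullSub_iff hK f).mpr hx

theorem bf_single (K : X → X → ℂ) (i j : X) :
    bf K (Finsupp.single i 1) (Finsupp.single j 1) = K i j := by
  rw [bf, Finsupp.sum_single_index (by simp)]
  rw [Finsupp.sum_single_index (by simp)]
  simp

/-! ### The B₂-norm-at-most-one predicate via kernels -/

/-- `u` is a Herz–Schur-type multiplier of norm at most one, kernel formulation. -/
def B2 {G : Type} [Group G] (u : G → ℂ) : Prop :=
  ∃ K : (G × Bool) → (G × Bool) → ℂ, IsPSDK K ∧ (∀ z, (K z z).re ≤ 1) ∧
    ∀ x y : G, K (x, false) (y, true) = u (y⁻¹ * x)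

theorem B2.toFact {G : Type} [Group G] {u : G → ℂ} (h : B2 u) : HasHSFactorization u 1 := by
  obtain ⟨K, hK, hd, hl⟩ := h
  letI : NormedAddCommGroup ((G × Bool →₀ ℂ) ⧸ nullSub hK) := (coreQ hK).toNormedAddCommGroup
  letI : InnerProductSpace ℂ ((G × Bool →₀ ℂ) ⧸ nullSub hK) := InnerProductSpace.ofCore (coreQ hK).toCore
  have hinner : ∀ f g : (G × Bool) →₀ ℂ,
      (inner ℂ (Submodule.Quotient.mk f : (G × Bool →₀ ℂ) ⧸ nullSub hK)
        (Submodule.Quotient.mk g) : ℂ) = bf K f g := by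
    intro f g
    rw [show (inner ℂ (Submodule.Quotient.mk f : (G × Bool →₀ ℂ) ⧸ nullSub hK)
        (Submodule.Quotient.mk g) : ℂ)
        = innerQ hK (Submodule.Quotient.mk f) (Submodule.Quotient.mk g) from rfl,
      innerQ_mk]
  have hnorm : ∀ z : G × Bool,
      ‖(Submodule.Quotient.mk (Finsupp.single z 1) : (G × Bool →₀ ℂ) ⧸ nullSub hK)‖ ≤ 1 := by
    intro z
    rw [norm_eq_sqrt_re_inner (𝕜 := ℂ), hinner, bf_single]
    calc Real.sqrt ((K z z).re) ≤ Real.sqrt 1 := Real.sqrt_le_sqrt (hd z)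
      _ = 1 := Real.sqrt_one
  refine ⟨(G × Bool →₀ ℂ) ⧸ nullSub hK, inferInstance, inferInstance,
    fun x => Submodule.Quotient.mk (Finsupp.single (x, false) 1),
    fun y => Submodule.Quotient.mk (Finsupp.single (y, true) 1), 1, 1,
    ?_, ?_, ?_, ?_⟩
  · intro x; exact hnorm _
  · intro y; exact hnorm _
  · norm_num
  · intro x y
    rw [hinner, bf_single, hl]

theorem factToB2 {G : Type} [Group G] {u : G → ℂ} (h : HasHSFactorization u 1) : B2 u := by
  obtain ⟨H, _, _, P, Q, a, b, hP, hQ, hab, huv⟩ := h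
  by_cases ha : a ≤ 0
  · have hP0 : ∀ x, P x = 0 := fun x => norm_le_zero_iff.mp ((hP x).trans ha)
    have hu0 : ∀ g, u g = 0 := by
      intro g
      have := huv g 1
      simp only [inv_one, one_mul] at this
      rw [this, hP0, inner_zero_left]
    exact ⟨fun _ _ => 0, ⟨fun i j => by simp, fun s c => by simp⟩, fun z => by simp,
      fun x y => by rw [hu0]⟩
  by_cases hb : b ≤ 0
  · have hQ0 : ∀ y, Q y = 0 := fun y => norm_le_zero_iff.mp ((hQ y).trans hb)
    have hu0 : ∀ g, u g = 0 := by
      intro g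
      have := huv g 1
      simp only [inv_one, one_mul] at this
      rw [this, hQ0, inner_zero_right]
    exact ⟨fun _ _ => 0, ⟨fun i j => by simp, fun s c => by simp⟩, fun z => by simp,
      fun x y => by rw [hu0]⟩
  push_neg at ha hb
  set V : G × Bool → H := fun z =>
    if z.2 then (Real.sqrt (a / b) : ℂ) • Q z.1 else (Real.sqrt (b / a) : ℂ) • P z.1 with hV
  have hself : ∀ v : H, (inner ℂ v v : ℂ) = ((‖v‖ ^ 2 : ℝ) : ℂ) := fun v => by
    rw [inner_self_eq_norm_sq_to_K (𝕜 := ℂ)]; norm_cast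
  have hVnorm : ∀ z, ‖V z‖ ^ 2 ≤ 1 := by
    intro z
    rcases z with ⟨g, bb⟩
    cases bb
    · simp only [hV, if_neg Bool.false_ne_true]
      rw [norm_smul, Complex.norm_real, Real.norm_eq_abs,
        _root_.abs_of_nonneg (Real.sqrt_nonneg _), mul_pow,
        Real.sq_sqrt (le_of_lt (div_pos hb ha))]
      calc b / a * ‖P g‖ ^ 2 ≤ b / a * a ^ 2 := by
            apply mul_le_mul_of_nonneg_left _ (le_of_lt (div_pos hb ha))
            exact pow_le_pow_left₀ (norm_nonneg _) (hP g) 2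
        _ = a * b := by field_simp
        _ ≤ 1 := hab
    · simp only [hV, if_pos]
      rw [norm_smul, Complex.norm_real, Real.norm_eq_abs,
        _root_.abs_of_nonneg (Real.sqrt_nonneg _), mul_pow,
        Real.sq_sqrt (le_of_lt (div_pos ha hb))]
      calc a / b * ‖Q g‖ ^ 2 ≤ a / b * b ^ 2 := by
            apply mul_le_mul_of_nonneg_left _ (le_of_lt (div_pos ha hb))
            exact pow_le_pow_left₀ (norm_nonneg _) (hQ g) 2
        _ = a * b := by field_simp
        _ ≤ 1 := hab
  refine ⟨fun i j => (inner ℂ (V i) (V j) : ℂ), ⟨fun i j => ?_, fun s c => ?_⟩, fun z => ?_,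
    fun x y => ?_⟩
  · exact (inner_conj_symm (V j) (V i)).symm
  · have e : ∑ i ∈ s, ∑ j ∈ s, (starRingEnd ℂ) (c i) * c j * (inner ℂ (V i) (V j) : ℂ)
        = (inner ℂ (∑ i ∈ s, c i • V i) (∑ j ∈ s, c j • V j) : ℂ) := by
      rw [sum_inner]
      refine Finset.sum_congr rfl fun i _ => ?_
      rw [inner_sum]
      refine Finset.sum_congr rfl fun j _ => ?_
      rw [inner_smul_left, inner_smul_right]
      ring
    rw [e, hself]
    exact Complex.zero_le_real.mpr (sq_nonneg _)
  · show (inner ℂ (V z) (V z) : ℂ).re ≤ 1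
    rw [hself, Complex.ofReal_re]
    exact hVnorm z
  · show (inner ℂ (V (x, false)) (V (y, true)) : ℂ) = u (y⁻¹ * x)
    have e1 : V (x, false) = (Real.sqrt (b / a) : ℂ) • P x := by simp [hV]
    have e2 : V (y, true) = (Real.sqrt (a / b) : ℂ) • Q y := by simp [hV]
    rw [e1, e2, inner_smul_left, inner_smul_right, Complex.conj_ofReal, ← mul_assoc]
    rw [show ((Real.sqrt (b / a) : ℂ)) * (Real.sqrt (a / b) : ℂ)
        = ((Real.sqrt (b / a) * Real.sqrt (a / b) : ℝ) : ℂ) by push_cast; ring]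
    rw [← Real.sqrt_mul (le_of_lt (div_pos hb ha)),
      show b / a * (a / b) = 1 by field_simp, Real.sqrt_one]
    rw [Complex.ofReal_one, one_mul]
    exact (huv x y).symm

theorem B2_one {G : Type} [Group G] : B2 (fun _ : G => (1 : ℂ)) :=
  ⟨fun _ _ => 1, isPSDK_one, fun z => by norm_num, fun x y => rfl⟩

theorem B2.conj {G : Type} [Group G] {u : G → ℂ} (h : B2 u) :
    B2 (fun g => (starRingEnd ℂ) (u g)) := by
  obtain ⟨K, hK, hd, hl⟩ := h
  refine ⟨fun i j => (starRingEnd ℂ) (K i j), hK.conj, fun z => by simpa using hd z,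
    fun x y => ?_⟩
  show (starRingEnd ℂ) (K (x, false) (y, true)) = _
  rw [hl]

theorem B2.mul {G : Type} [Group G] {u v : G → ℂ} (h : B2 u) (h' : B2 v) :
    B2 (fun g => u g * v g) := by
  obtain ⟨K, hK, hd, hl⟩ := h
  obtain ⟨K', hK', hd', hl'⟩ := h'
  refine ⟨fun i j => K i j * K' i j, hK.mul hK', fun z => ?_, fun x y => ?_⟩
  · show (K z z * K' z z).re ≤ 1
    rw [Complex.mul_re, hK.diag_im, hK'.diag_im, mul_zero, sub_zero]
    exact mul_le_one₀ (hd z) (hK'.diag_re_nonneg z) (hd' z)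
  · show K (x, false) (y, true) * K' (x, false) (y, true) = _
    rw [hl, hl']

theorem B2_pow {G : Type} [Group G] {u : G → ℂ} (h : B2 u) (k : ℕ) :
    B2 (fun g => (u g) ^ k) := by
  induction k with
  | zero => simpa using B2_one
  | succ n ih =>
      have := ih.mul h
      simpa [pow_succ] using this

theorem B2_finsum {G : Type} [Group G] (N : ℕ) (r : ℕ → ℝ) (v : ℕ → G → ℂ)
    (hv : ∀ k, B2 (v k)) (hr : ∀ k, 0 ≤ r k) (hs : ∑ k ∈ Finset.range N, r k ≤ 1) :
    B2 (fun g => ∑ k ∈ Finset.range N, (r k : ℂ) * v k g) := by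
  choose K hK hd hl using hv
  refine ⟨fun i j => ∑ k ∈ Finset.range N, (r k : ℂ) * K k i j, ⟨?_, ?_⟩, ?_, ?_⟩
  · intro i j
    rw [map_sum]
    refine Finset.sum_congr rfl fun k _ => ?_
    rw [map_mul, Complex.conj_ofReal, (hK k).1 i j]
  · intro s c
    have main : ∑ i ∈ s, ∑ j ∈ s, (starRingEnd ℂ) (c i) * c j
          * (∑ k ∈ Finset.range N, (r k : ℂ) * K k i j)
        = ∑ k ∈ Finset.range N, (r k : ℂ)
          * (∑ i ∈ s, ∑ j ∈ s, (starRingEnd ℂ) (c i) * c j * K k i j) := by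
      calc ∑ i ∈ s, ∑ j ∈ s, (starRingEnd ℂ) (c i) * c j
              * (∑ k ∈ Finset.range N, (r k : ℂ) * K k i j)
          = ∑ i ∈ s, ∑ k ∈ Finset.range N, ∑ j ∈ s,
              (r k : ℂ) * ((starRingEnd ℂ) (c i) * c j * K k i j) := by
            refine Finset.sum_congr rfl fun i _ => ?_
            rw [Finset.sum_comm]
            refine Finset.sum_congr rfl fun j _ => ?_
            rw [Finset.mul_sum]
            refine Finset.sum_congr rfl fun k _ => ?_
            ring
        _ = ∑ k ∈ Finset.range N, ∑ i ∈ s, ∑ j ∈ s,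
              (r k : ℂ) * ((starRingEnd ℂ) (c i) * c j * K k i j) := Finset.sum_comm
        _ = ∑ k ∈ Finset.range N, (r k : ℂ)
              * (∑ i ∈ s, ∑ j ∈ s, (starRingEnd ℂ) (c i) * c j * K k i j) := by
            refine Finset.sum_congr rfl fun k _ => ?_
            rw [Finset.mul_sum]
            refine Finset.sum_congr rfl fun i _ => ?_
            rw [Finset.mul_sum]
    rw [main]
    refine Finset.sum_nonneg fun k _ => mul_nonneg ?_ ((hK k).2 s c)
    exact Complex.zero_le_real.mpr (hr k)
  · intro z
    rw [Complex.re_sum]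
    calc ∑ k ∈ Finset.range N, ((r k : ℂ) * K k z z).re
        ≤ ∑ k ∈ Finset.range N, r k := by
          refine Finset.sum_le_sum fun k _ => ?_
          rw [Complex.mul_re, Complex.ofReal_re, Complex.ofReal_im, zero_mul, sub_zero]
          calc r k * (K k z z).re ≤ r k * 1 :=
                mul_le_mul_of_nonneg_left (hd k z) (hr k)
            _ = r k := mul_one _
      _ ≤ 1 := hs
  · intro x y
    refine Finset.sum_congr rfl fun k _ => ?_
    rw [hl]

theorem B2_limit {G : Type} [Group G] {u : ℕ → G → ℂ} {v : G → ℂ} (h : ∀ n, B2 (u n))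
    (hc : ∀ g, Tendsto (fun n => u n g) atTop (nhds (v g))) : B2 v := by
  choose K hK hd hl using h
  set U : Ultrafilter ℕ := Ultrafilter.of atTop with hU
  have hUle : (U : Filter ℕ) ≤ atTop := Ultrafilter.of_le atTop
  have exlim : ∀ i j : G × Bool, ∃ z : ℂ, Tendsto (fun n => K n i j) U (nhds z) := by
    intro i j
    have hbd : ∀ n, K n i j ∈ Metric.closedBall (0 : ℂ) 1 := by
      intro n
      rw [Metric.mem_closedBall, dist_zero_right]
      exact (hK n).norm_le_one (hd n) i j
    have hle : (U.map (fun n => K n i j) : Filter ℂ) ≤ Filter.principal (Metric.closedBall 0 1) := by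
      rw [Filter.le_principal_iff]
      exact Filter.mem_map.mpr (Filter.univ_mem' hbd)
    obtain ⟨z, _, hz⟩ := (isCompact_closedBall (0:ℂ) 1).ultrafilter_le_nhds
      (U.map (fun n => K n i j)) hle
    exact ⟨z, hz⟩
  choose L hL using exlim
  have hclosed_nonneg : IsClosed {z : ℂ | 0 ≤ z} := by
    have : {z : ℂ | 0 ≤ z} = Complex.re ⁻¹' (Set.Ici 0) ∩ Complex.im ⁻¹' {0} := by
      ext z
      simp [Complex.le_def, eq_comm]
    rw [this]
    exact (isClosed_Ici.preimage Complex.continuous_re).inter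
      (isClosed_singleton.preimage Complex.continuous_im)
  refine ⟨L, ⟨?_, ?_⟩, ?_, ?_⟩
  · intro i j
    have t1 : Tendsto (fun n => K n j i) U (nhds (L j i)) := hL j i
    have t2 : Tendsto (fun n => K n j i) U (nhds ((starRingEnd ℂ) (L i j))) := by
      have : (fun n => K n j i) = fun n => (starRingEnd ℂ) (K n i j) := by
        funext n; exact (hK n).1 i j
      rw [this]
      exact (Complex.continuous_conj.tendsto _).comp (hL i j)
    exact tendsto_nhds_unique t1 t2
  · intro s c
    have tendS : Tendsto (fun n => ∑ i ∈ s, ∑ j ∈ s, (starRingEnd ℂ) (c i) * c j * K n i j) U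
        (nhds (∑ i ∈ s, ∑ j ∈ s, (starRingEnd ℂ) (c i) * c j * L i j)) := by
      refine tendsto_finset_sum _ fun i _ => tendsto_finset_sum _ fun j _ => ?_
      exact (hL i j).const_mul _
    exact hclosed_nonneg.mem_of_tendsto tendS
      (Filter.Eventually.of_forall fun n => (hK n).2 s c)
  · intro z
    have hcl : IsClosed {w : ℂ | w.re ≤ 1} := isClosed_Iic.preimage Complex.continuous_re
    exact hcl.mem_of_tendsto (hL z z) (Filter.Eventually.of_forall fun n => hd n z)
  · intro x y
    have t1 : Tendsto (fun n => K n (x, false) (y, true)) U (nhds (L (x, false) (y, true))) :=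
      hL _ _
    have t2 : Tendsto (fun n => K n (x, false) (y, true)) U (nhds (v (y⁻¹ * x))) := by
      have : (fun n => K n (x, false) (y, true)) = fun n => u n (y⁻¹ * x) := by
        funext n; exact hl n x y
      rw [this]
      exact (hc _).mono_left hUle
    exact tendsto_nhds_unique t1 t2

theorem B2_prod {G : Type} [Group G] (N : ℕ) (v : ℕ → G → ℂ) (hv : ∀ n, B2 (v n)) :
    B2 (fun g => ∏ n ∈ Finset.range N, v n g) := by
  induction N with
  | zero => simpa using B2_one
  | succ n ih =>
      have := ih.mul (hv n)
      convert this using 2 with g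
      rw [Finset.prod_range_succ]

theorem B2_exp {G : Type} [Group G] {s : ℝ} (hs : 0 ≤ s) {w : G → ℝ}
    (hw : B2 (fun g => ((w g : ℝ) : ℂ))) :
    B2 (fun g => ((Real.exp (-(s * (1 - w g))) : ℝ) : ℂ)) := by
  apply B2_limit (u := fun N g => ∑ k ∈ Finset.range N,
    ((Real.exp (-s) * s ^ k / (Nat.factorial k) : ℝ) : ℂ) * ((w g : ℂ)) ^ k)
  · intro N
    apply B2_finsum N _ _ (fun k => B2_pow hw k)
    · intro k
      positivity
    · have e : ∑ k ∈ Finset.range N, Real.exp (-s) * s ^ k / (Nat.factorial k)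
          = Real.exp (-s) * ∑ k ∈ Finset.range N, s ^ k / (Nat.factorial k) := by
        rw [Finset.mul_sum]
        refine Finset.sum_congr rfl fun k _ => ?_
        ring
      rw [e]
      calc Real.exp (-s) * ∑ k ∈ Finset.range N, s ^ k / (Nat.factorial k)
          ≤ Real.exp (-s) * Real.exp s :=
            mul_le_mul_of_nonneg_left (Real.sum_le_exp_of_nonneg hs N) (Real.exp_pos _).le
        _ = 1 := by rw [← Real.exp_add]; simp
  · intro g
    have hreal : ∀ N : ℕ, (∑ k ∈ Finset.range N,
        ((Real.exp (-s) * s ^ k / (Nat.factorial k) : ℝ) : ℂ) * ((w g : ℂ)) ^ k)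
        = ((∑ k ∈ Finset.range N,
            Real.exp (-s) * ((s * w g) ^ k / (Nat.factorial k)) : ℝ) : ℂ) := by
      intro N
      push_cast
      refine Finset.sum_congr rfl fun k _ => ?_
      rw [mul_pow]
      push_cast
      ring
    have hhs : HasSum (fun k => Real.exp (-s) * ((s * w g) ^ k / (Nat.factorial k)))
        (Real.exp (-s) * Real.exp (s * w g)) := by
      have := NormedSpace.expSeries_div_hasSum_exp (s * w g)
      rw [← Real.exp_eq_exp_ℝ] at this
      exact this.mul_left _
    have htend : Tendsto (fun N => ∑ k ∈ Finset.range N,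
        Real.exp (-s) * ((s * w g) ^ k / (Nat.factorial k))) atTop
        (nhds (Real.exp (-s) * Real.exp (s * w g))) := hhs.tendsto_sum_nat
    have hval : Real.exp (-s) * Real.exp (s * w g) = Real.exp (-(s * (1 - w g))) := by
      rw [← Real.exp_add]
      congr 1
      ring
    rw [hval] at htend
    have := (Complex.continuous_ofReal.tendsto _).comp htend
    simp only [Function.comp_def] at this
    convert this using 1
    funext N
    exact hreal N

end WHaux

open WHaux Complex Finset Filter

/-- A countable discrete group has the weak Haagerup property with constant 1 iff there is a
proper nonnegative function `ψ` with `‖e^{-tψ}‖_{B₂} ≤ 1` for all `t > 0`. -/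
theorem weakHaagerupOne_iff_proper_function (G : Type) [Group G] [Countable G] :
    WeakHaagerupPropertyOne G ↔
      ∃ ψ : G → ℝ, (∀ g, 0 ≤ ψ g) ∧ (∀ R : ℝ, {g : G | ψ g ≤ R}.Finite) ∧
        ∀ t : ℝ, 0 < t →
          HasHSFactorization (fun g : G => ((Real.exp (-(t * ψ g)) : ℝ) : ℂ)) 1 := by
  constructor
  · -- forward direction
    intro hW
    classical
    obtain ⟨f, hf⟩ := exists_surjective_nat G
    have hε : ∀ n : ℕ, 0 < ((1/2 : ℝ)) ^ n / (3 * ((n : ℝ) + 1)) := by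
      intro n; positivity
    choose u hu1 hu2 hu3 using fun n => hW ((Finset.range (n+1)).image f) _ (hε n)
    have hub : ∀ n g, ‖u n g‖ ≤ 1 := by
      intro n g
      obtain ⟨H, _, _, P, Q, a, b, hP, hQ, hab, hl⟩ := hu2 n
      have hg := hl g 1
      simp only [inv_one, one_mul] at hg
      rw [hg]
      calc ‖(inner ℂ (P g) (Q 1) : ℂ)‖ ≤ ‖P g‖ * ‖Q 1‖ := norm_inner_le_norm _ _
        _ ≤ a * b := mul_le_mul (hP g) (hQ 1) (norm_nonneg _) ((norm_nonneg _).trans (hP g))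
        _ ≤ 1 := hab
    set w : ℕ → G → ℝ := fun n g => ‖u n g‖ ^ 2 with hw
    have hw0 : ∀ n g, 0 ≤ w n g := fun n g => sq_nonneg _
    have hw1 : ∀ n g, w n g ≤ 1 := by
      intro n g
      have h1 := hub n g
      have h2 : w n g = ‖u n g‖ ^ 2 := rfl
      rw [h2]
      nlinarith [norm_nonneg (u n g)]
    have hB2w : ∀ n, B2 (fun g => ((w n g : ℝ) : ℂ)) := by
      intro n
      have h1 : B2 (u n) := factToB2 (hu2 n)
      have h2 := h1.mul h1.conj
      convert h2 using 2 with g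
      rw [Complex.mul_conj, hw]
      rw [Complex.normSq_eq_norm_sq]
    have hterm : ∀ (k n : ℕ), k ≤ n → ((n : ℝ) + 1) * (1 - w n (f k)) ≤ (1/2 : ℝ) ^ n := by
      intro k n hkn
      have hmem : f k ∈ (Finset.range (n+1)).image f :=
        Finset.mem_image_of_mem f (Finset.mem_range.mpr (Nat.lt_succ_of_le hkn))
      have h3 := hu3 n (f k) hmem
      have hn1 : 1 - ‖u n (f k)‖ ≤ ‖u n (f k) - 1‖ := by
        have hnorm := norm_sub_norm_le (1 : ℂ) (u n (f k))
        rw [norm_one, norm_sub_rev] at hnorm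
        linarith
      have h4 : 1 - w n (f k) ≤ 2 * ((1/2 : ℝ) ^ n / (3 * ((n : ℝ) + 1))) := by
        have hub' := hub n (f k)
        have heq : 1 - w n (f k) = (1 - ‖u n (f k)‖) * (1 + ‖u n (f k)‖) := by
          rw [hw]; ring
        nlinarith [norm_nonneg (u n (f k))]
      have hpos : (0 : ℝ) < (n : ℝ) + 1 := by positivity
      calc ((n : ℝ) + 1) * (1 - w n (f k))
          ≤ ((n : ℝ) + 1) * (2 * ((1/2 : ℝ) ^ n / (3 * ((n : ℝ) + 1)))) :=
            mul_le_mul_of_nonneg_left h4 hpos.le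
        _ = (2/3) * (1/2 : ℝ) ^ n := by field_simp
        _ ≤ (1/2 : ℝ) ^ n := by
            nlinarith [pow_nonneg (by norm_num : (0:ℝ) ≤ 1/2) n]
    have hsumm : ∀ g, Summable (fun n : ℕ => ((n : ℝ) + 1) * (1 - w n g)) := by
      intro g
      obtain ⟨k, rfl⟩ := hf g
      rw [← summable_nat_add_iff k]
      apply Summable.of_nonneg_of_le
      · intro n
        exact mul_nonneg (by positivity) (by linarith [hw1 (n + k) (f k)])
      · intro n
        calc (((n + k : ℕ) : ℝ) + 1) * (1 - w (n + k) (f k))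
            ≤ (1/2 : ℝ) ^ (n + k) := hterm k (n + k) (Nat.le_add_left k n)
          _ ≤ (1/2 : ℝ) ^ n :=
              pow_le_pow_of_le_one (by norm_num) (by norm_num) (Nat.le_add_right n k)
      · exact summable_geometric_of_lt_one (by norm_num) (by norm_num)
    refine ⟨fun g => ∑' n : ℕ, ((n : ℝ) + 1) * (1 - w n g), fun g => ?_, fun R => ?_, fun t ht => ?_⟩
    · exact tsum_nonneg fun n => mul_nonneg (by positivity) (by linarith [hw1 n g])
    · -- properness
      set N := Nat.ceil (2 * max R 0) with hN
      have hsub : {g : G | (∑' n : ℕ, ((n : ℝ) + 1) * (1 - w n g)) ≤ R}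
          ⊆ {g : G | (1/2 : ℝ) ≤ ‖u N g‖} := by
        intro g hg
        simp only [Set.mem_setOf_eq] at hg ⊢
        have hle : ((N : ℝ) + 1) * (1 - w N g) ≤ ∑' n : ℕ, ((n : ℝ) + 1) * (1 - w n g) :=
          Summable.le_tsum (hsumm g) N fun j _ =>
            mul_nonneg (by positivity) (by linarith [hw1 j g])
        have hNR : 2 * max R 0 ≤ (N : ℝ) := Nat.le_ceil _
        have hR : R ≤ max R 0 := le_max_left _ _
        have h1 : ((N : ℝ) + 1) * (1 - w N g) ≤ max R 0 := by
          calc ((N : ℝ) + 1) * (1 - w N g) ≤ R := le_trans hle hg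
            _ ≤ max R 0 := hR
        have h2 : 1 - w N g ≤ 1/2 := by
          have hpos : (0 : ℝ) < (N : ℝ) + 1 := by positivity
          by_contra hcon
          push_neg at hcon
          have : ((N : ℝ) + 1) * (1/2) < ((N : ℝ) + 1) * (1 - w N g) :=
            mul_lt_mul_of_pos_left hcon hpos
          have hmax : (0:ℝ) ≤ max R 0 := le_max_right _ _
          nlinarith
        have h3 : (1:ℝ)/2 ≤ w N g := by linarith
        have h4 : (1:ℝ)/2 ≤ ‖u N g‖ ^ 2 := h3
        nlinarith [norm_nonneg (u N g)]
      exact (hu1 N (1/2) (by norm_num)).subset hsub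
    · -- factorization of e^{-tψ}
      apply B2.toFact
      apply B2_limit (u := fun N g =>
        ((Real.exp (-(t * ∑ n ∈ Finset.range N, ((n : ℝ) + 1) * (1 - w n g))) : ℝ) : ℂ))
      · intro N
        have heq : (fun g => ((Real.exp (-(t * ∑ n ∈ Finset.range N,
            ((n : ℝ) + 1) * (1 - w n g))) : ℝ) : ℂ))
            = fun g => ∏ n ∈ Finset.range N,
                ((Real.exp (-((t * ((n : ℝ) + 1)) * (1 - w n g))) : ℝ) : ℂ) := by
          funext g
          have hsum : -(t * ∑ n ∈ Finset.range N, ((n : ℝ) + 1) * (1 - w n g))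
              = ∑ n ∈ Finset.range N, -((t * ((n : ℝ) + 1)) * (1 - w n g)) := by
            rw [Finset.mul_sum, ← Finset.sum_neg_distrib]
            refine Finset.sum_congr rfl fun n _ => ?_
            ring
          rw [hsum, Real.exp_sum, Complex.ofReal_prod]
        rw [heq]
        apply B2_prod
        intro n
        exact B2_exp (mul_nonneg ht.le (by positivity)) (hB2w n)
      · intro g
        have h1 : Tendsto (fun N => ∑ n ∈ Finset.range N, ((n : ℝ) + 1) * (1 - w n g)) atTop
            (nhds (∑' n : ℕ, ((n : ℝ) + 1) * (1 - w n g))) := (hsumm g).hasSum.tendsto_sum_nat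
        have h2 : Tendsto (fun N => Real.exp (-(t * ∑ n ∈ Finset.range N,
            ((n : ℝ) + 1) * (1 - w n g)))) atTop
            (nhds (Real.exp (-(t * ∑' n : ℕ, ((n : ℝ) + 1) * (1 - w n g))))) :=
          (Real.continuous_exp.tendsto _).comp ((h1.const_mul t).neg)
        exact (Complex.continuous_ofReal.tendsto _).comp h2
  · -- backward direction
    rintro ⟨ψ, hψ0, hψp, hψf⟩ F ε hε
    obtain ⟨M, hM⟩ := Finset.exists_le (F.image ψ)
    set M' := max M 0 with hM'
    have hM'0 : 0 ≤ M' := le_max_right _ _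
    set t := ε / (M' + 1) with htdef
    have ht : 0 < t := div_pos hε (by linarith)
    refine ⟨fun g => ((Real.exp (-(t * ψ g)) : ℝ) : ℂ), ?_, hψf t ht, ?_⟩
    · intro δ hδ
      apply (hψp ((-Real.log δ) / t)).subset
      intro g hg
      simp only [Set.mem_setOf_eq] at hg ⊢
      rw [Complex.norm_real, Real.norm_eq_abs, abs_of_pos (Real.exp_pos _)] at hg
      have hlog : Real.log δ ≤ -(t * ψ g) := (Real.log_le_iff_le_exp hδ).mpr hg
      rw [le_div_iff₀ ht]
      nlinarith [hlog]
    · intro g hgF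
      have hψM : ψ g ≤ M' := by
        have := hM (ψ g) (Finset.mem_image_of_mem ψ hgF)
        exact le_trans this (le_max_left _ _)
      have hexp_le : Real.exp (-(t * ψ g)) ≤ 1 :=
        Real.exp_le_one_iff.mpr (by nlinarith [hψ0 g, ht.le])
      have hexp_ge : 1 - t * ψ g ≤ Real.exp (-(t * ψ g)) := by
        have := Real.add_one_le_exp (-(t * ψ g))
        linarith
      have e : ((Real.exp (-(t * ψ g)) : ℝ) : ℂ) - 1
          = ((Real.exp (-(t * ψ g)) - 1 : ℝ) : ℂ) := by push_cast; ring
      rw [e, Complex.norm_real, Real.norm_eq_abs, abs_of_nonpos (by linarith)]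
      have h1 : t * ψ g ≤ t * M' := mul_le_mul_of_nonneg_left hψM ht.le
      have h2 : t * M' ≤ ε := by
        rw [htdef]
        rw [div_mul_eq_mul_div, div_le_iff₀ (by linarith : (0:ℝ) < M' + 1)]
        nlinarith
      linarith
end
end

section
/- Let G be a group and suppose u_n : G → ℂ (n ∈ ℕ) each admit a Hilbert-space factorization with bound ≤ 1, and u_n → u pointwise. Then u admits a Hilbert-space factorization with bound ≤ 1. (The 'unit ball of B₂(G)' is closed under pointwise limits.) -/
noncomputable section

open Filter

/-- Every element of the unit ball admits a factorization with both bounds equal to 1. -/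
lemma HasHSFactorization.normalize {G : Type} [Group G] {u : G → ℂ}
    (h : HasHSFactorization u 1) :
    ∃ (H : Type) (_ : NormedAddCommGroup H) (_ : InnerProductSpace ℂ H) (P Q : G → H),
      (∀ x, ‖P x‖ ≤ 1) ∧ (∀ y, ‖Q y‖ ≤ 1) ∧
      ∀ x y, u (y⁻¹ * x) = (inner ℂ (P x) (Q y) : ℂ) := by
  obtain ⟨H, hn, hi, P, Q, a, b, hP, hQ, hab, hu⟩ := h
  by_cases ha : a ≤ 0
  · have hP0 : ∀ x, P x = 0 := fun x => norm_le_zero_iff.mp ((hP x).trans ha)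
    exact ⟨H, hn, hi, 0, 0, by simp, by simp, fun x y => by
      simp [hu x y, hP0 x]⟩
  by_cases hb : b ≤ 0
  · have hQ0 : ∀ y, Q y = 0 := fun y => norm_le_zero_iff.mp ((hQ y).trans hb)
    exact ⟨H, hn, hi, 0, 0, by simp, by simp, fun x y => by
      simp [hu x y, hQ0 y]⟩
  push_neg at ha hb
  set r : ℝ := Real.sqrt (b / a) with hr
  set s : ℝ := Real.sqrt (a / b) with hs
  have hr0 : 0 ≤ r := Real.sqrt_nonneg _
  have hs0 : 0 ≤ s := Real.sqrt_nonneg _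
  have hab1 : Real.sqrt (a * b) ≤ 1 := by
    rw [show (1:ℝ) = Real.sqrt 1 by simp]
    exact Real.sqrt_le_sqrt hab
  have hra : r * a = Real.sqrt (a * b) := by
    rw [hr, show a = Real.sqrt (a ^ 2) by rw [Real.sqrt_sq ha.le],
      ← Real.sqrt_mul (by positivity)]
    congr 1
    field_simp
    linear_combination (Real.sq_sqrt (sq_nonneg a)).symm
  have hsb : s * b = Real.sqrt (a * b) := by
    rw [hs, show b = Real.sqrt (b ^ 2) by rw [Real.sqrt_sq hb.le],
      ← Real.sqrt_mul (by positivity)]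
    congr 1
    field_simp
    linear_combination (Real.sq_sqrt (sq_nonneg b)).symm
  have hrs : r * s = 1 := by
    rw [hr, hs, ← Real.sqrt_mul (by positivity)]
    rw [show b / a * (a / b) = 1 by field_simp]
    simp
  refine ⟨H, hn, hi, fun x => (r : ℂ) • P x, fun y => (s : ℂ) • Q y, fun x => ?_, fun y => ?_, ?_⟩
  · rw [norm_smul]
    calc ‖(r:ℂ)‖ * ‖P x‖ = r * ‖P x‖ := by simp [abs_of_nonneg hr0]
    _ ≤ r * a := by
        exact mul_le_mul_of_nonneg_left (hP x) hr0
    _ ≤ 1 := hra ▸ hab1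
  · rw [norm_smul]
    calc ‖(s:ℂ)‖ * ‖Q y‖ = s * ‖Q y‖ := by simp [abs_of_nonneg hs0]
    _ ≤ s * b := mul_le_mul_of_nonneg_left (hQ y) hs0
    _ ≤ 1 := hsb ▸ hab1
  · intro x y
    rw [inner_smul_left, inner_smul_right, Complex.conj_ofReal, ← hu x y, ← mul_assoc,
      ← Complex.ofReal_mul, hrs]
    simp

private lemma exists_ultralim (φ : Ultrafilter ℕ) (g : ℕ → ℂ) (M : ℝ) (hg : ∀ n, ‖g n‖ ≤ M) :
    ∃ c, Tendsto g ↑φ (nhds c) := by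
  obtain ⟨c, -, hc⟩ := (isCompact_closedBall (0 : ℂ) M).ultrafilter_le_nhds (φ.map g)
    (by
      rw [Ultrafilter.coe_map, Filter.le_principal_iff, Filter.mem_map]
      exact Filter.univ_mem' fun n => by
        simpa [Metric.mem_closedBall, dist_zero_right] using hg n)
  exact ⟨c, by rwa [Ultrafilter.coe_map] at hc⟩

/-- The unit ball of `B₂(G)` is closed under pointwise limits. -/
theorem unit_ball_closed_pointwise {G : Type} [Group G] (u : ℕ → G → ℂ) (v : G → ℂ)
    (h : ∀ n, HasHSFactorization (u n) 1)
    (hlim : ∀ g : G, Filter.Tendsto (fun n => u n g) Filter.atTop (nhds (v g))) :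
    HasHSFactorization v 1 := by
  choose HH hng hip P Q hP hQ hu using fun n => (h n).normalize
  set φ : Ultrafilter ℕ := Filter.hyperfilter ℕ with hφdef
  have hφ : (φ : Filter ℕ) ≤ Filter.atTop := by
    rw [← Nat.cofinite_eq_atTop]; exact Filter.hyperfilter_le_cofinite
  set R : ∀ n, (G ⊕ G) → HH n := fun n => Sum.elim (P n) (Q n) with hRdef
  have hR : ∀ n s, ‖R n s‖ ≤ 1 := by
    rintro n (x | y)
    · exact hP n x
    · exact hQ n y
  set F := ((G ⊕ G) →₀ ℂ) with hFdef
  set V : ∀ n, F → HH n := fun n f => f.sum fun s a => a • R n s with hVdef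
  have hVnorm : ∀ n (f : F), ‖V n f‖ ≤ f.support.sum fun s => ‖f s‖ := by
    intro n f
    refine (norm_sum_le _ _).trans (Finset.sum_le_sum fun s _ => ?_)
    rw [norm_smul]
    exact mul_le_of_le_one_right (norm_nonneg _) (hR n s)
  have key : ∀ f g : F, ∃ c : ℂ,
      Tendsto (fun n => (inner ℂ (V n f) (V n g) : ℂ)) ↑φ (nhds c) := by
    intro f g
    refine exists_ultralim φ _
      ((f.support.sum fun s => ‖f s‖) * (g.support.sum fun s => ‖g s‖)) fun n => ?_
    exact (norm_inner_le_norm _ _).trans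
      (mul_le_mul (hVnorm n f) (hVnorm n g) (norm_nonneg _)
        (Finset.sum_nonneg fun _ _ => norm_nonneg _))
  choose inn hinn using key
  have hVadd : ∀ n (f g : F), V n (f + g) = V n f + V n g := fun n f g =>
    Finsupp.sum_add_index' (fun s => zero_smul ℂ _) (fun s a b => add_smul a b _)
  have hVsmul : ∀ n (r : ℂ) (f : F), V n (r • f) = r • V n f := by
    intro n r f
    show (r • f).sum (fun s a => a • R n s) = r • f.sum fun s a => a • R n s
    rw [Finsupp.sum_smul_index' (h := fun s (a : ℂ) => a • R n s) fun i => zero_smul ℂ _,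
      Finsupp.smul_sum]
    refine Finset.sum_congr rfl fun s _ => ?_
    show (r • f s) • R n s = r • (f s) • R n s
    rw [smul_eq_mul, mul_smul]
  letI c : PreInnerProductSpace.Core ℂ F :=
    { inner := inn
      conj_inner_symm := fun f g => by
        refine tendsto_nhds_unique
          ((((RCLike.continuous_conj (K := ℂ)).tendsto _).comp (hinn g f)).congr fun n => ?_)
          (hinn f g)
        exact inner_conj_symm _ _
      re_inner_nonneg := fun f => by
        refine ge_of_tendsto' ((RCLike.continuous_re.tendsto _).comp (hinn f f)) fun n => ?_
        exact inner_self_nonneg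
      add_left := fun f f' g => by
        refine tendsto_nhds_unique
          ((hinn (f + f') g).congr fun n => ?_) ((hinn f g).add (hinn f' g))
        rw [hVadd, inner_add_left]
      smul_left := fun f g r => by
        refine tendsto_nhds_unique
          ((hinn (r • f) g).congr fun n => ?_) ((hinn f g).const_mul _)
        rw [hVsmul, inner_smul_left] }
  letI : SeminormedAddCommGroup F := @InnerProductSpace.Core.toSeminormedAddCommGroup ℂ F _ _ _ c
  letI : NormedSpace ℂ F := @InnerProductSpace.Core.toNormedSpace ℂ F _ _ _ c
  letI : InnerProductSpace ℂ F :=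
    { toNormedSpace := ‹NormedSpace ℂ F›
      toInner := c.toInner
      norm_sq_eq_re_inner := fun x => by
        have h1 : ‖x‖ = Real.sqrt (RCLike.re (c.inner x x)) := rfl
        rw [h1, Real.sq_sqrt (c.re_inner_nonneg x)]
      conj_inner_symm := c.conj_inner_symm
      add_left := c.add_left
      smul_left := c.smul_left }
  have hV1 : ∀ n (s : G ⊕ G), V n (Finsupp.single s 1) = R n s := by
    intro n s
    show (Finsupp.single s (1:ℂ)).sum (fun t a => a • R n t) = R n s
    rw [Finsupp.sum_single_index (h := fun t (a : ℂ) => a • R n t) (zero_smul ℂ _), one_smul]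
  have hnorm1 : ∀ s : G ⊕ G, ‖SeparationQuotient.mk (Finsupp.single s (1:ℂ) : F)‖ ≤ 1 := by
    intro s
    rw [SeparationQuotient.norm_mk]
    set f : F := Finsupp.single s (1:ℂ)
    have hsq : ‖f‖ ^ 2 ≤ 1 := by
      rw [norm_sq_eq_re_inner (𝕜 := ℂ)]
      refine le_of_tendsto' ((RCLike.continuous_re.tendsto _).comp (hinn f f)) fun n => ?_
      show RCLike.re (inner ℂ (V n f) (V n f) : ℂ) ≤ 1
      rw [← norm_sq_eq_re_inner (𝕜 := ℂ), hV1]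
      calc ‖R n s‖ ^ 2 ≤ 1 ^ 2 := by
            exact pow_le_pow_left₀ (norm_nonneg _) (hR n s) 2
      _ = 1 := one_pow 2
    exact (pow_le_one_iff_of_nonneg (norm_nonneg _) two_ne_zero).mp hsq
  refine ⟨SeparationQuotient F, inferInstance, inferInstance,
    fun x => SeparationQuotient.mk (Finsupp.single (Sum.inl x) 1),
    fun y => SeparationQuotient.mk (Finsupp.single (Sum.inr y) 1),
    1, 1, fun x => hnorm1 _, fun y => hnorm1 _, by norm_num, fun x y => ?_⟩
  rw [SeparationQuotient.inner_mk_mk]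
  show v (y⁻¹ * x) = inn (Finsupp.single (Sum.inl x) 1) (Finsupp.single (Sum.inr y) 1)
  refine tendsto_nhds_unique ((hlim (y⁻¹ * x)).mono_left hφ)
    ((hinn _ _).congr fun n => ?_)
  rw [hV1, hV1]
  exact (hu n x y).symm
end
end

section
/- Let (M, τ) be a finite von Neumann algebra with faithful normal tracial state τ, and let S, T : M → M be bounded linear maps satisfying ⟨Tx, y⟩_τ = ⟨x, Sy⟩_τ for all x, y ∈ M, where ⟨x,y⟩_τ = τ(y*x). Then for all x ∈ M, ‖Tx‖_τ ≤ max{‖T‖, ‖S‖} · ‖x‖_τ; consequently T extends to a bounded operator on L²(M, τ) of norm at most max{‖T‖, ‖S‖}. -/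
noncomputable section

private lemma tau_re_le_sq {M : Type} [CStarAlgebra M] (τ : M →ₗ[ℂ] ℂ) (hτ1 : τ 1 = 1)
    (hpos : ∀ x : M, 0 ≤ (τ (star x * x)).re ∧ (τ (star x * x)).im = 0) (a : M) :
    (τ (star a * a)).re ≤ ‖a‖ ^ 2 := by
  letI := CStarAlgebra.spectralOrder M
  haveI := CStarAlgebra.spectralOrderedRing M
  have h : star a * a ≤ algebraMap ℝ M (‖a‖ ^ 2) :=
    CStarAlgebra.star_mul_le_algebraMap_norm_sq
  have h' : (0:M) ≤ algebraMap ℝ M (‖a‖ ^ 2) - star a * a := sub_nonneg.mpr h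
  rw [StarOrderedRing.nonneg_iff] at h'
  have key : ∀ p ∈ AddSubmonoid.closure (Set.range fun s : M => star s * s),
      0 ≤ (τ p).re := by
    intro p hp
    induction hp using AddSubmonoid.closure_induction with
    | mem q hq => obtain ⟨s, rfl⟩ := hq; exact (hpos s).1
    | zero => simp
    | add q r _ _ hq hr => rw [map_add]; simpa using add_nonneg hq hr
  have key' := key _ h'
  have halg : τ (algebraMap ℝ M (‖a‖ ^ 2)) = ((‖a‖ ^ 2 : ℝ) : ℂ) := by
    rw [IsScalarTower.algebraMap_apply ℝ ℂ M, Algebra.algebraMap_eq_smul_one, map_smul, hτ1,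
      smul_eq_mul, mul_one, Complex.coe_algebraMap]
  rw [map_sub, halg, Complex.sub_re, Complex.ofReal_re] at key'
  linarith

private lemma tau_conj_symm {M : Type} [CStarAlgebra M] (τ : M →ₗ[ℂ] ℂ)
    (hpos : ∀ x : M, 0 ≤ (τ (star x * x)).re ∧ (τ (star x * x)).im = 0) :
    ∀ a b : M, (starRingEnd ℂ) (τ (star b * a)) = τ (star a * b) := by
  intro a b
  have him : ∀ c : M, (τ (star c * c)).im = 0 := fun c => (hpos c).2
  have h1 := him (a + b)
  have h2 := him (a + Complex.I • b)
  simp only [star_add, star_smul, add_mul, mul_add, map_add, map_smul, smul_mul_assoc,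
    mul_smul_comm, smul_smul, Complex.star_def, Complex.conj_I, neg_smul, smul_eq_mul,
    Complex.add_im, Complex.mul_im, Complex.mul_re, Complex.neg_im, Complex.neg_re,
    Complex.I_re, Complex.I_im, neg_mul, map_neg, him] at h1 h2
  apply Complex.ext <;> simp [Complex.conj_re, Complex.conj_im] <;> linarith

/-- If bounded maps `S, T` on a C*-algebra with faithful tracial state `τ` are mutually
adjoint with respect to `⟨x,y⟩_τ = τ(y*x)`, then `T` is bounded for the trace 2-norm with
bound `max ‖T‖ ‖S‖`; consequently `T` extends to `L²(M,τ)`. -/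
theorem trace_two_norm_bound {M : Type} [CStarAlgebra M]
    (τ : M →ₗ[ℂ] ℂ) (hτ1 : τ 1 = 1)
    (htrace : ∀ x y : M, τ (x * y) = τ (y * x))
    (hpos : ∀ x : M, 0 ≤ (τ (star x * x)).re ∧ (τ (star x * x)).im = 0)
    (hfaithful : ∀ x : M, τ (star x * x) = 0 → x = 0)
    (S T : M →L[ℂ] M)
    (hadj : ∀ x y : M, τ (star y * T x) = τ (star (S y) * x)) :
    ∀ x : M, Real.sqrt (τ (star (T x) * T x)).re
      ≤ max ‖T‖ ‖S‖ * Real.sqrt (τ (star x * x)).re := by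
  intro x
  set C := max ‖T‖ ‖S‖ with hCdef
  have hC0 : (0:ℝ) ≤ C := le_max_of_le_left (norm_nonneg T)
  have hsymm := tau_conj_symm τ hpos
  have hQ0 : ∀ a : M, 0 ≤ (τ (star a * a)).re := fun a => (hpos a).1
  -- Cauchy–Schwarz for the sesquilinear form
  letI core : PreInnerProductSpace.Core ℂ M :=
    { inner := fun a b => τ (star a * b)
      conj_inner_symm := fun a b => hsymm a b
      re_inner_nonneg := fun a => by simpa only [RCLike.re_to_complex] using (hpos a).1
      add_left := fun a b c => by simp only [star_add, add_mul, map_add]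
      smul_left := fun a b r => by
        simp only [star_smul, smul_mul_assoc, map_smul, Complex.star_def, smul_eq_mul] }
  have CS : ∀ a b : M, (τ (star a * b)).re ^ 2
      ≤ (τ (star a * a)).re * (τ (star b * b)).re := by
    intro a b
    have h := InnerProductSpace.Core.inner_mul_inner_self_le (𝕜 := ℂ) (F := M) a b
    have hi : ∀ u v : M, (@inner ℂ M (InnerProductSpace.Core.toPreInner') u v)
        = τ (star u * v) := fun _ _ => rfl
    rw [hi, hi, hi, hi] at h
    simp only [RCLike.re_to_complex] at h
    have hn : ‖τ (star b * a)‖ = ‖τ (star a * b)‖ := by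
      rw [← hsymm a b, RCLike.norm_conj]
    rw [hn] at h
    have hre : |(τ (star a * b)).re| ≤ ‖τ (star a * b)‖ := by
      exact Complex.abs_re_le_norm _
    calc (τ (star a * b)).re ^ 2 = |(τ (star a * b)).re| ^ 2 := (sq_abs _).symm
      _ ≤ ‖τ (star a * b)‖ ^ 2 := pow_le_pow_left₀ (abs_nonneg _) hre 2
      _ = ‖τ (star a * b)‖ * ‖τ (star a * b)‖ := sq _
      _ ≤ (τ (star a * a)).re * (τ (star b * b)).re := h
  -- the operator A = S ∘ T, self-adjoint for the form
  set A : M →L[ℂ] M := S.comp T with hAdef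
  have hTT : ∀ a b : M, τ (star (A a) * b) = τ (star (T a) * T b) :=
    fun a b => (hadj b (T a)).symm
  have hAadj : ∀ a b : M, τ (star (A a) * b) = τ (star a * A b) := by
    intro a b
    rw [hTT a b, ← hsymm a (A b), hTT b a]
    exact (hsymm (T a) (T b)).symm
  have hpow : ∀ (k : ℕ) (a b : M), τ (star ((A ^ k) a) * b) = τ (star a * (A ^ k) b) := by
    intro k
    induction k with
    | zero => intro a b; simp
    | succ n ih =>
      intro a b
      calc τ (star ((A ^ (n+1)) a) * b)
          = τ (star ((A ^ n) (A a)) * b) := by rw [pow_succ, ContinuousLinearMap.mul_apply]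
        _ = τ (star (A a) * (A ^ n) b) := ih (A a) b
        _ = τ (star a * A ((A ^ n) b)) := hAadj a ((A ^ n) b)
        _ = τ (star a * (A ^ (n+1)) b) := by rw [pow_succ', ContinuousLinearMap.mul_apply]
  have hQT : (τ (star (T x) * T x)).re = (τ (star (A x) * x)).re := by rw [hTT x x]
  -- the key iterated inequality
  have key : ∀ n : ℕ, (τ (star (T x) * T x)).re ^ (2 ^ (n+1)) * (τ (star x * x)).re
      ≤ (τ (star ((A ^ 2 ^ n) x) * ((A ^ 2 ^ n) x))).re
        * (τ (star x * x)).re ^ (2 ^ (n+1)) := by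
    intro n
    induction n with
    | zero =>
      have hcs := CS (A x) x
      calc (τ (star (T x) * T x)).re ^ (2 ^ 1) * (τ (star x * x)).re
          = (τ (star (A x) * x)).re ^ 2 * (τ (star x * x)).re := by rw [hQT]; norm_num
        _ ≤ ((τ (star (A x) * A x)).re * (τ (star x * x)).re) * (τ (star x * x)).re :=
            mul_le_mul_of_nonneg_right hcs (hQ0 x)
        _ = (τ (star ((A ^ 2 ^ 0) x) * ((A ^ 2 ^ 0) x))).re
            * (τ (star x * x)).re ^ (2 ^ 1) := by norm_num; ring
    | succ n ih =>
      rcases eq_or_lt_of_le (hQ0 x) with hx0 | hx0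
      · rw [← hx0, mul_zero, zero_pow (by positivity), mul_zero]
      · -- square the induction hypothesis
        have hL0 : 0 ≤ (τ (star (T x) * T x)).re ^ (2 ^ (n+1)) * (τ (star x * x)).re :=
          mul_nonneg (pow_nonneg (hQ0 _) _) (hQ0 x)
        have sq_ih := mul_self_le_mul_self hL0 ih
        -- identify Q(A^{2^n} x) with an inner product against x
        have h2k : (τ (star ((A ^ 2 ^ n) x) * ((A ^ 2 ^ n) x))).re
            = (τ (star x * (A ^ 2 ^ (n+1)) x)).re := by
          rw [hpow (2 ^ n) x ((A ^ 2 ^ n) x), ← ContinuousLinearMap.mul_apply, ← pow_add]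
          congr 2
          rw [pow_succ, mul_two]
        have hcs2 : (τ (star x * (A ^ 2 ^ (n+1)) x)).re ^ 2
            ≤ (τ (star x * x)).re
              * (τ (star ((A ^ 2 ^ (n+1)) x) * ((A ^ 2 ^ (n+1)) x))).re := CS x _
        rw [← h2k] at hcs2
        have e1 : ((τ (star (T x) * T x)).re ^ (2 ^ (n+1)) * (τ (star x * x)).re)
              * ((τ (star (T x) * T x)).re ^ (2 ^ (n+1)) * (τ (star x * x)).re)
            = ((τ (star (T x) * T x)).re ^ (2 ^ (n+1+1)) * (τ (star x * x)).re)
              * (τ (star x * x)).re := by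
          rw [pow_succ 2 (n+1), pow_mul]; ring
        have e2 : ((τ (star ((A ^ 2 ^ n) x) * ((A ^ 2 ^ n) x))).re
              * (τ (star x * x)).re ^ (2 ^ (n+1)))
              * ((τ (star ((A ^ 2 ^ n) x) * ((A ^ 2 ^ n) x))).re
              * (τ (star x * x)).re ^ (2 ^ (n+1)))
            = (τ (star ((A ^ 2 ^ n) x) * ((A ^ 2 ^ n) x))).re ^ 2
              * (τ (star x * x)).re ^ (2 ^ (n+1+1)) := by
          rw [pow_succ 2 (n+1), pow_mul]; ring
        rw [e1, e2] at sq_ih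
        refine le_of_mul_le_mul_right ?_ hx0
        calc ((τ (star (T x) * T x)).re ^ (2 ^ (n+1+1)) * (τ (star x * x)).re)
              * (τ (star x * x)).re
            ≤ (τ (star ((A ^ 2 ^ n) x) * ((A ^ 2 ^ n) x))).re ^ 2
              * (τ (star x * x)).re ^ (2 ^ (n+1+1)) := sq_ih
          _ ≤ ((τ (star x * x)).re
              * (τ (star ((A ^ 2 ^ (n+1)) x) * ((A ^ 2 ^ (n+1)) x))).re)
              * (τ (star x * x)).re ^ (2 ^ (n+1+1)) :=
            mul_le_mul_of_nonneg_right hcs2 (pow_nonneg (hQ0 x) _)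
          _ = ((τ (star ((A ^ 2 ^ (n+1)) x) * ((A ^ 2 ^ (n+1)) x))).re
              * (τ (star x * x)).re ^ (2 ^ (n+1+1))) * (τ (star x * x)).re := by ring
  -- operator-norm bound on the iterates
  have hbound : ∀ n : ℕ, (τ (star ((A ^ 2 ^ n) x) * ((A ^ 2 ^ n) x))).re
      ≤ (C ^ 2) ^ (2 ^ (n+1)) * ‖x‖ ^ 2 := by
    intro n
    have h1 : (τ (star ((A ^ 2 ^ n) x) * ((A ^ 2 ^ n) x))).re ≤ ‖(A ^ 2 ^ n) x‖ ^ 2 :=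
      tau_re_le_sq τ hτ1 hpos _
    have h2 : ‖(A ^ 2 ^ n) x‖ ≤ ‖A ^ 2 ^ n‖ * ‖x‖ := (A ^ 2 ^ n).le_opNorm x
    have h3 : ‖A ^ 2 ^ n‖ ≤ ‖A‖ ^ 2 ^ n := norm_pow_le' A (by positivity)
    have h4 : ‖A‖ ≤ C ^ 2 := by
      calc ‖A‖ ≤ ‖S‖ * ‖T‖ := ContinuousLinearMap.opNorm_comp_le S T
        _ ≤ C * C := mul_le_mul (le_max_right _ _) (le_max_left _ _) (norm_nonneg T) hC0
        _ = C ^ 2 := (sq C).symm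
    have h5 : ‖A ^ 2 ^ n‖ ≤ (C ^ 2) ^ 2 ^ n :=
      h3.trans (pow_le_pow_left₀ (norm_nonneg A) h4 _)
    calc (τ (star ((A ^ 2 ^ n) x) * ((A ^ 2 ^ n) x))).re ≤ ‖(A ^ 2 ^ n) x‖ ^ 2 := h1
      _ ≤ (‖A ^ 2 ^ n‖ * ‖x‖) ^ 2 := pow_le_pow_left₀ (norm_nonneg _) h2 2
      _ ≤ ((C ^ 2) ^ 2 ^ n * ‖x‖) ^ 2 :=
        pow_le_pow_left₀ (mul_nonneg (norm_nonneg _) (norm_nonneg _))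
          (mul_le_mul_of_nonneg_right h5 (norm_nonneg x)) 2
      _ = (C ^ 2) ^ (2 ^ (n+1)) * ‖x‖ ^ 2 := by
        rw [mul_pow, ← pow_mul, pow_succ 2 n]
  -- the main estimate with squares
  have final : (τ (star (T x) * T x)).re ≤ C ^ 2 * (τ (star x * x)).re := by
    rcases eq_or_lt_of_le (hQ0 x) with hx0 | hx0
    · have hx0' : (τ (star x * x)).re = 0 := hx0.symm
      have h := CS (A x) x
      rw [hx0', mul_zero, ← hQT] at h
      have hq : (τ (star (T x) * T x)).re = 0 := by nlinarith [hQ0 (T x)]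
      rw [hq, hx0', mul_zero]
    · by_contra hcon
      push_neg at hcon
      rcases eq_or_lt_of_le hC0 with hC0' | hCpos
      · have hT : T = 0 := by
          have h1 : ‖T‖ ≤ C := le_max_left _ _
          rw [← hC0'] at h1
          exact norm_le_zero_iff.mp h1
        have hTx : (τ (star (T x) * T x)).re = 0 := by
          rw [hT]; simp
        rw [hTx] at hcon
        nlinarith [mul_nonneg (sq_nonneg C) (hQ0 x)]
      · set B := C ^ 2 * (τ (star x * x)).re with hBdef
        have hBpos : 0 < B := mul_pos (pow_pos hCpos 2) hx0
        have hr1 : 1 < (τ (star (T x) * T x)).re / B := (one_lt_div hBpos).mpr hcon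
        obtain ⟨n0, hn0⟩ := pow_unbounded_of_one_lt (‖x‖ ^ 2 / (τ (star x * x)).re) hr1
        have hkey := key n0
        have hb := hbound n0
        have step : (τ (star (T x) * T x)).re ^ (2 ^ (n0+1)) * (τ (star x * x)).re
            ≤ ((C ^ 2) ^ (2 ^ (n0+1)) * ‖x‖ ^ 2) * (τ (star x * x)).re ^ (2 ^ (n0+1)) :=
          hkey.trans (mul_le_mul_of_nonneg_right hb (pow_nonneg (hQ0 x) _))
        have hdiv : ((τ (star (T x) * T x)).re / B) ^ (2 ^ (n0+1))
            ≤ ‖x‖ ^ 2 / (τ (star x * x)).re := by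
          rw [div_pow, div_le_div_iff₀ (pow_pos hBpos _) hx0]
          calc (τ (star (T x) * T x)).re ^ 2 ^ (n0+1) * (τ (star x * x)).re
              ≤ ((C ^ 2) ^ (2 ^ (n0+1)) * ‖x‖ ^ 2) * (τ (star x * x)).re ^ (2 ^ (n0+1)) := step
            _ = ‖x‖ ^ 2 * B ^ 2 ^ (n0+1) := by rw [hBdef, mul_pow]; ring
        have hmono : ((τ (star (T x) * T x)).re / B) ^ n0
            ≤ ((τ (star (T x) * T x)).re / B) ^ (2 ^ (n0+1)) :=
          pow_le_pow_right₀ hr1.le (le_of_lt (Nat.lt_of_lt_of_le (Nat.lt_two_pow_self (n := n0))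
            (Nat.pow_le_pow_right (by norm_num) (Nat.le_succ n0))))
        linarith
  calc Real.sqrt (τ (star (T x) * T x)).re
      ≤ Real.sqrt (C ^ 2 * (τ (star x * x)).re) := Real.sqrt_le_sqrt final
    _ = C * Real.sqrt (τ (star x * x)).re := by
        rw [Real.sqrt_mul (by positivity), Real.sqrt_sq hC0]
end
end

section
/- Let G be a group acting on a probability space (X, μ) by measure-preserving transformations, let H be a group, and let α : G × X → H be a cocycle: α(gh, x) = α(g, hx)·α(h, x) for all g,h ∈ G and almost all x ∈ X. Suppose u : H → ℂ admits a Hilbert-space factorization u(b⁻¹a) = ⟨P(a),Q(b)⟩ with (sup‖P‖)(sup‖Q‖) ≤ C and P, Q measurable (e.g. X, H countable/discrete). Define û(g) = ∫_X u(α(g,x)) dμ(x). Then û admits a Hilbert-space factorization over G with bound ≤ C, witnessed in the Hilbert space L²(X, μ; 𝓗) via P̃(g)(x) = P(α(g,x)) and Q̃(g)(x) = Q(α(g,x)). -/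
noncomputable section

open MeasureTheory

/-- Inducing a multiplier through a cocycle `α : G × X → H` over a measure-preserving
action on a probability space: `û(g) = ∫_X u(α(g,x)) dμ(x)` has a Hilbert-space
factorization over `G` with the same bound. -/
theorem cocycle_induced_factorization {G : Type} [Group G] {H : Type} [Group H]
    {X : Type} [Countable X] [MeasurableSpace X] [MeasurableSingletonClass X]
    [MulAction G X]
    (μ : Measure X) [IsProbabilityMeasure μ]
    (hinv : ∀ g : G, MeasurePreserving (fun x : X => g • x) μ μ)
    (α : G → X → H)
    (hcoc : ∀ (g h : G) (x : X), α (g * h) x = α g (h • x) * α h x)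
    (u : H → ℂ) (C : ℝ) (hu : HasHSFactorization u C) :
    HasHSFactorization (fun g : G => ∫ x, u (α g x) ∂μ) C := by
  obtain ⟨E, i1, i2, P, Q, a, b, hP, hQ, hab, hfac⟩ := hu
  have ha : 0 ≤ a := le_trans (norm_nonneg (P 1)) (hP 1)
  have hb : 0 ≤ b := le_trans (norm_nonneg (Q 1)) (hQ 1)
  -- the twisted cocycle
  set β : G → X → H := fun g x => α g (g⁻¹ • x) with hβ
  -- strong measurability of everything from a countable discrete space
  have hsm : ∀ f : X → E, StronglyMeasurable f := by
    letI : MeasurableSpace E := borel E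
    haveI : BorelSpace E := ⟨rfl⟩
    intro f
    rw [stronglyMeasurable_iff_measurable_separable]
    exact ⟨measurable_of_countable f, (Set.countable_range f).isSeparable⟩
  have hmemP : ∀ g : G, MemLp (fun x => P (β g x)) 2 μ :=
    fun g => MemLp.of_bound (hsm _).aestronglyMeasurable a (ae_of_all _ fun x => hP _)
  have hmemQ : ∀ g : G, MemLp (fun x => Q (β g x)) 2 μ :=
    fun g => MemLp.of_bound (hsm _).aestronglyMeasurable b (ae_of_all _ fun x => hQ _)
  refine ⟨Lp E 2 μ, inferInstance, inferInstance,
    fun g => (hmemP g).toLp _, fun g => (hmemQ g).toLp _, a, b, ?_, ?_, hab, ?_⟩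
  · intro g
    have := Lp.norm_le_of_ae_bound (μ := μ) (f := (hmemP g).toLp _) ha
      (((hmemP g).coeFn_toLp).mono fun x hx => hx ▸ hP _)
    simpa [measureUnivNNReal, measure_univ] using this
  · intro g
    have := Lp.norm_le_of_ae_bound (μ := μ) (f := (hmemQ g).toLp _) hb
      (((hmemQ g).coeFn_toLp).mono fun x hx => hx ▸ hQ _)
    simpa [measureUnivNNReal, measure_univ] using this
  · intro g h
    -- inner product in L² is the integral of pointwise inner products
    have hinner : (inner ℂ ((hmemP g).toLp _) ((hmemQ h).toLp _) : ℂ)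
        = ∫ x, (inner ℂ (P (β g x)) (Q (β h x)) : ℂ) ∂μ := by
      rw [L2.inner_def]
      refine integral_congr_ae ?_
      filter_upwards [(hmemP g).coeFn_toLp, (hmemQ h).coeFn_toLp] with x hx hy
      rw [hx, hy]
    rw [hinner]
    -- change of variables x ↦ g • x
    have hme : MeasurableEmbedding (fun x : X => g⁻¹ • x) := by
      let e : X ≃ᵐ X :=
        { toEquiv := ⟨fun x => g⁻¹ • x, fun x => g • x, fun x => by simp, fun x => by simp⟩
          measurable_toFun := measurable_of_countable _
          measurable_invFun := measurable_of_countable _ }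
      have he : ⇑e = fun x : X => g⁻¹ • x := rfl
      exact he ▸ e.measurableEmbedding
    have hcv := (hinv g⁻¹).integral_comp hme (fun x => u (α (h⁻¹ * g) x))
    show (∫ x, u (α (h⁻¹ * g) x) ∂μ) = _
    rw [← hcv]
    refine integral_congr_ae (ae_of_all _ fun x => ?_)
    show u (α (h⁻¹ * g) (g⁻¹ • x)) = (inner ℂ (P (β g x)) (Q (β h x)) : ℂ)
    -- pointwise identity from the cocycle relation
    have key : α (h⁻¹ * g) (g⁻¹ • x) = (β h x)⁻¹ * β g x := by
      have h1 : α (h * (h⁻¹ * g)) (g⁻¹ • x)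
          = α h ((h⁻¹ * g) • g⁻¹ • x) * α (h⁻¹ * g) (g⁻¹ • x) := hcoc _ _ _
      have h2 : h * (h⁻¹ * g) = g := by group
      have h3 : (h⁻¹ * g) • (g⁻¹ • x) = h⁻¹ • x := by
        rw [smul_smul]
        congr 1
        group
      rw [h2, h3] at h1
      rw [hβ]
      simp only
      rw [h1]
      group
    rw [key, hfac]
end
end
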